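/- arXiv:2503.02694 — 10 statements merged into one kernel-verified Lean document; each statement's English description precedes it below -/
import Mathlib

section
/- Let (D, λ) be a temporal digraph and let x, y be distinct vertices of D. If there exist a temporal x,y-path and a temporal y,x-path in (D, λ), then some cycle of D is a weak-cycle of (D, λ). -/
/-- A temporal walk skeleton with `q` arcs: vertices `v 0, …, v q` and times
`t 0, …, t (q-1)` (so `t i` is the time used on the arc from `v i` to `v (i+1)`). -/
structure TWalk (V : Type*) where
  q : ℕ
  v : Fin (q + 1) → V
  t : Fin q → ℕ

namespace TWalk

variable {V : Type*}

/-- The first vertex of a walk. -/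
def first (W : TWalk V) : V := W.v 0

/-- The last vertex of a walk. -/
def last (W : TWalk V) : V := W.v (Fin.last W.q)

/-- The arrival time (i.e. the last time) of a walk. -/
def arrival (W : TWalk V) : ℕ :=
  if h : 0 < W.q then W.t ⟨W.q - 1, by omega⟩ else 0

/-- `W` is a (non-strict) temporal walk in the temporal digraph `(D, lam)`:
it has at least one arc, consecutive vertices are joined by arcs of `D`, each
time belongs to the time set of the corresponding arc, and the times are
non-decreasing. -/
def IsWalk (D : V → V → Prop) (lam : V → V → Finset ℕ) (W : TWalk V) : Prop :=
  1 ≤ W.q ∧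
  (∀ i : Fin W.q,
      D (W.v i.castSucc) (W.v i.succ) ∧ W.t i ∈ lam (W.v i.castSucc) (W.v i.succ)) ∧
  ∀ i j : Fin W.q, i ≤ j → W.t i ≤ W.t j

/-- `W` is a strict temporal walk in the temporal digraph `(D, lam)`:
as `IsWalk` but with strictly increasing times. -/
def IsStrictWalk (D : V → V → Prop) (lam : V → V → Finset ℕ) (W : TWalk V) : Prop :=
  1 ≤ W.q ∧
  (∀ i : Fin W.q,
      D (W.v i.castSucc) (W.v i.succ) ∧ W.t i ∈ lam (W.v i.castSucc) (W.v i.succ)) ∧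
  ∀ i j : Fin W.q, i < j → W.t i < W.t j

/-- The set of arcs used by a walk. -/
def arcs (W : TWalk V) : Set (V × V) :=
  {p | ∃ i : Fin W.q, p = (W.v i.castSucc, W.v i.succ)}

/-- The set of temporal arcs (arc-time pairs) used by a walk. -/
def tarcs (W : TWalk V) : Set ((V × V) × ℕ) :=
  {p | ∃ i : Fin W.q, p = ((W.v i.castSucc, W.v i.succ), W.t i)}

/-- `W` is a temporal `x,y`-path: a temporal walk from `x` to `y` with all of its
vertices pairwise distinct. -/
def IsPath (D : V → V → Prop) (lam : V → V → Finset ℕ) (x y : V) (W : TWalk V) : Prop :=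
  W.IsWalk D lam ∧ W.first = x ∧ W.last = y ∧ Function.Injective W.v

/-- `W` is a temporal `x,x`-path: a closed temporal walk at `x` whose first `q`
vertices are pairwise distinct. -/
def IsClosedPath (D : V → V → Prop) (lam : V → V → Finset ℕ) (x : V) (W : TWalk V) : Prop :=
  W.IsWalk D lam ∧ W.first = x ∧ W.last = x ∧
    Function.Injective fun i : Fin W.q => W.v i.castSucc

/-- `W` is a strict temporal `x,x`-path. -/
def IsStrictClosedPath (D : V → V → Prop) (lam : V → V → Finset ℕ) (x : V)
    (W : TWalk V) : Prop :=
  W.IsStrictWalk D lam ∧ W.first = x ∧ W.last = x ∧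
    Function.Injective fun i : Fin W.q => W.v i.castSucc

end TWalk

/-- A cycle skeleton on `q` vertices. -/
structure DiCycle (V : Type*) where
  q : ℕ
  v : Fin q → V

namespace DiCycle

variable {V : Type*}

/-- The cyclic successor of an index. -/
def next (C : DiCycle V) (i : Fin C.q) : Fin C.q :=
  ⟨(i.val + 1) % C.q, Nat.mod_lt _ i.pos⟩

/-- `C` is a cycle of the digraph `D`: it has at least two pairwise distinct
vertices and consecutive vertices (cyclically) are joined by arcs of `D`. -/
def IsCycle (D : V → V → Prop) (C : DiCycle V) : Prop :=
  2 ≤ C.q ∧ Function.Injective C.v ∧ ∀ i : Fin C.q, D (C.v i) (C.v (C.next i))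

/-- The vertex set of a cycle. -/
def vertices (C : DiCycle V) : Set V := Set.range C.v

/-- The arc set of a cycle. -/
def arcs (C : DiCycle V) : Set (V × V) :=
  {p | ∃ i : Fin C.q, p = (C.v i, C.v (C.next i))}

end DiCycle

variable {V : Type*}

/-- `(D, lam)` is a temporal digraph: `D` is loopless and `lam` assigns a
nonempty finite set of times to every arc. -/
def IsTemporalDigraph (D : V → V → Prop) (lam : V → V → Finset ℕ) : Prop :=
  (∀ u, ¬ D u u) ∧ ∀ u w, D u w → (lam u w).Nonempty

/-- `C` is a simple-cycle of `(D, lam)`: some vertex of `C` admits a temporal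
`x,x`-path using exactly the arcs of `C`. -/
def IsSimpleCycle (D : V → V → Prop) (lam : V → V → Finset ℕ) (C : DiCycle V) : Prop :=
  ∃ x ∈ C.vertices, ∃ P : TWalk V, P.IsClosedPath D lam x ∧ P.arcs = C.arcs

/-- `C` is a weak-cycle of `(D, lam)`: there are distinct vertices `x, y` of `C`,
a temporal `x,y`-path and a temporal `y,x`-path whose arc sets union to the arcs
of `C`. -/
def IsWeakCycle (D : V → V → Prop) (lam : V → V → Finset ℕ) (C : DiCycle V) : Prop :=
  ∃ x ∈ C.vertices, ∃ y ∈ C.vertices, x ≠ y ∧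
    ∃ P P' : TWalk V, P.IsPath D lam x y ∧ P'.IsPath D lam y x ∧
      P.arcs ∪ P'.arcs = C.arcs

/-- `C` is a strong-cycle of `(D, lam)`: every vertex of `C` admits a temporal
`x,x`-path using exactly the arcs of `C`. -/
def IsStrongCycle (D : V → V → Prop) (lam : V → V → Finset ℕ) (C : DiCycle V) : Prop :=
  ∀ x ∈ C.vertices, ∃ P : TWalk V, P.IsClosedPath D lam x ∧ P.arcs = C.arcs

section WeakCycleAux

variable {V : Type*} {D : V → V → Prop} {lam : V → V → Finset ℕ}

/-- The sub-walk of `W` from position `a` to position `b`. -/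
def TWalk.sub (W : TWalk V) (a b : ℕ) (ha : a ≤ b) (hb : b ≤ W.q) : TWalk V where
  q := b - a
  v i := W.v ⟨a + i.val, by have := i.isLt; omega⟩
  t i := W.t ⟨a + i.val, by have := i.isLt; omega⟩

lemma TWalk.sub_isPath {W : TWalk V} {a b : ℕ} (hab : a < b) (hb : b ≤ W.q)
    (hW : W.IsWalk D lam) (hinj : Function.Injective W.v) :
    (W.sub a b (le_of_lt hab) hb).IsPath D lam (W.v ⟨a, by omega⟩) (W.v ⟨b, by omega⟩) := by
  obtain ⟨hq, harc, hmono⟩ := hW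
  refine ⟨⟨?_, fun i => ?_, fun i j hij => ?_⟩, ?_, ?_, fun i j h => ?_⟩
  · show 1 ≤ b - a; omega
  · have hib : i.val < b - a := i.isLt
    exact harc ⟨a + i.val, by omega⟩
  · have hib : i.val < b - a := i.isLt
    have hjb : j.val < b - a := j.isLt
    exact hmono ⟨a + i.val, by omega⟩ ⟨a + j.val, by omega⟩
      (by simp only [Fin.mk_le_mk]; have := Fin.le_def.mp hij; omega)
  · show W.v ⟨a + (0 : Fin (b - a + 1)).val, _⟩ = W.v ⟨a, _⟩
    exact congrArg W.v (Fin.ext (by simp))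
  · show W.v ⟨a + (Fin.last (b - a)).val, _⟩ = W.v ⟨b, _⟩
    exact congrArg W.v (Fin.ext (by simp [Fin.last]; omega))
  · have hib : i.val < b - a + 1 := i.isLt
    have hjb : j.val < b - a + 1 := j.isLt
    have h2 : (⟨a + i.val, by omega⟩ : Fin (W.q + 1))
        = ⟨a + j.val, by omega⟩ := hinj h
    have h3 := congrArg Fin.val h2
    simp only at h3
    exact Fin.ext (by omega)

/-- The cycle obtained by gluing an `x,y`-path and a `y,x`-path. -/
def DiCycle.glue (P P' : TWalk V) : DiCycle V where
  q := P.q + P'.q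
  v i := if h : i.val < P.q then P.v ⟨i.val, by omega⟩
    else P'.v ⟨i.val - P.q, by have := i.isLt; omega⟩

section Glue

variable {P P' : TWalk V} (h1 : 1 ≤ P.q) (h1' : 1 ≤ P'.q)
  (hyy : P.last = P'.first) (hxx : P'.last = P.first)

set_option linter.unusedSectionVars false in
include h1 h1' hyy hxx in
lemma DiCycle.glue_pair_lt (i : Fin (P.q + P'.q)) (h : i.val < P.q) :
    (DiCycle.glue P P').v i = P.v ⟨i.val, by omega⟩ ∧
    (DiCycle.glue P P').v ((DiCycle.glue P P').next i) = P.v ⟨i.val + 1, by omega⟩ := by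
  constructor
  · exact dif_pos h
  · have hnv : ((DiCycle.glue P P').next i).val = i.val + 1 := by
      show (i.val + 1) % (P.q + P'.q) = i.val + 1
      exact Nat.mod_eq_of_lt (by omega)
    show (if h : ((DiCycle.glue P P').next i).val < P.q
        then P.v ⟨((DiCycle.glue P P').next i).val, by omega⟩
        else P'.v ⟨((DiCycle.glue P P').next i).val - P.q, by
          have := ((DiCycle.glue P P').next i).isLt; omega⟩) = P.v ⟨i.val + 1, by omega⟩
    by_cases hc : i.val + 1 < P.q
    · rw [dif_pos (by omega : ((DiCycle.glue P P').next i).val < P.q)]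
      exact congrArg P.v (Fin.ext (by simpa using hnv))
    · have hieq : i.val + 1 = P.q := by omega
      rw [dif_neg (by omega : ¬ ((DiCycle.glue P P').next i).val < P.q)]
      have e1 : (⟨((DiCycle.glue P P').next i).val - P.q, by
          have := ((DiCycle.glue P P').next i).isLt; omega⟩ : Fin (P'.q + 1)) = 0 :=
        Fin.ext (by simp [hnv]; omega)
      have e2 : (⟨i.val + 1, by omega⟩ : Fin (P.q + 1)) = Fin.last P.q :=
        Fin.ext (by simp [Fin.last]; omega)
      rw [e1, e2]
      exact (hyy.symm : P'.first = P.last)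

set_option linter.unusedSectionVars false in
include h1 h1' hyy hxx in
lemma DiCycle.glue_pair_ge (i : Fin (P.q + P'.q)) (h : P.q ≤ i.val) :
    (DiCycle.glue P P').v i = P'.v ⟨i.val - P.q, by have := i.isLt; omega⟩ ∧
    (DiCycle.glue P P').v ((DiCycle.glue P P').next i)
      = P'.v ⟨i.val - P.q + 1, by have := i.isLt; omega⟩ := by
  have hiq : i.val < P.q + P'.q := i.isLt
  constructor
  · exact dif_neg (by omega)
  · by_cases hc : i.val + 1 < P.q + P'.q
    · have hnv : ((DiCycle.glue P P').next i).val = i.val + 1 := by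
        show (i.val + 1) % (P.q + P'.q) = i.val + 1
        exact Nat.mod_eq_of_lt hc
      show (if h : ((DiCycle.glue P P').next i).val < P.q
          then P.v ⟨((DiCycle.glue P P').next i).val, by omega⟩
          else P'.v ⟨((DiCycle.glue P P').next i).val - P.q, by
            have := ((DiCycle.glue P P').next i).isLt; omega⟩) = _
      rw [dif_neg (by omega : ¬ ((DiCycle.glue P P').next i).val < P.q)]
      exact congrArg P'.v (Fin.ext (by simp [hnv]; omega))
    · have hieq : i.val + 1 = P.q + P'.q := by omega
      have hnv : ((DiCycle.glue P P').next i).val = 0 := by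
        show (i.val + 1) % (P.q + P'.q) = 0
        rw [hieq, Nat.mod_self]
      show (if h : ((DiCycle.glue P P').next i).val < P.q
          then P.v ⟨((DiCycle.glue P P').next i).val, by omega⟩
          else P'.v ⟨((DiCycle.glue P P').next i).val - P.q, by
            have := ((DiCycle.glue P P').next i).isLt; omega⟩) = _
      rw [dif_pos (by omega : ((DiCycle.glue P P').next i).val < P.q)]
      have e1 : (⟨((DiCycle.glue P P').next i).val, by omega⟩ : Fin (P.q + 1)) = 0 :=
        Fin.ext (by simp [hnv])
      have e2 : (⟨i.val - P.q + 1, by have := i.isLt; omega⟩ : Fin (P'.q + 1))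
          = Fin.last P'.q := Fin.ext (by simp [Fin.last]; omega)
      rw [e1, e2]
      exact (hxx : P'.last = P.first).symm

end Glue

theorem weakCycle_aux (D : V → V → Prop) (lam : V → V → Finset ℕ) :
    ∀ n : ℕ, ∀ x y : V, x ≠ y → ∀ P P' : TWalk V, P.IsPath D lam x y →
      P'.IsPath D lam y x → P.q + P'.q ≤ n →
      ∃ C : DiCycle V, C.IsCycle D ∧ IsWeakCycle D lam C := by
  intro n
  induction n with
  | zero => intro x y hxy P P' hP hP' hn; have := hP.1.1; omega
  | succ n ih =>
    intro x y hxy P P' hP hP' hn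
    obtain ⟨⟨hq1, harcP, hmonoP⟩, hPf, hPl, hPinj⟩ := hP
    obtain ⟨⟨hq1', harcP', hmonoP'⟩, hPf', hPl', hPinj'⟩ := hP'
    have hyy : P.last = P'.first := hPl.trans hPf'.symm
    have hxx : P'.last = P.first := hPl'.trans hPf.symm
    by_cases hsep : ∀ w, w ∈ Set.range P.v → w ∈ Set.range P'.v → w = x ∨ w = y
    · -- disjoint case: glue into a cycle
      refine ⟨DiCycle.glue P P', ?_, ?_⟩
      · refine ⟨by show 2 ≤ P.q + P'.q; omega, ?_, ?_⟩
        · -- injectivity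
          intro i j hij
          have hiq : i.val < P.q + P'.q := i.isLt
          have hjq : j.val < P.q + P'.q := j.isLt
          have key : ∀ a b : Fin (P.q + P'.q), a.val < P.q → P.q ≤ b.val →
              (DiCycle.glue P P').v a ≠ (DiCycle.glue P P').v b := by
            intro a b ha hb heq
            have hbq : b.val < P.q + P'.q := b.isLt
            rw [(DiCycle.glue_pair_lt hq1 hq1' hyy hxx a ha).1,
              (DiCycle.glue_pair_ge hq1 hq1' hyy hxx b hb).1] at heq
            have hw := hsep (P.v ⟨a.val, by omega⟩) ⟨_, rfl⟩ ⟨_, heq.symm⟩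
            rcases hw with hw | hw
            · have hx' : P'.v ⟨b.val - P.q, by omega⟩ = P'.v (Fin.last P'.q) := by
                rw [← heq, hw]; exact hPl'.symm
              have := congrArg Fin.val (hPinj' hx')
              simp [Fin.last] at this; omega
            · have hy' : P.v ⟨a.val, by omega⟩ = P.v (Fin.last P.q) := by
                rw [hw]; exact hPl.symm
              have := congrArg Fin.val (hPinj hy')
              simp [Fin.last] at this; omega
          by_cases hi : i.val < P.q <;> by_cases hj : j.val < P.q
          · rw [(DiCycle.glue_pair_lt hq1 hq1' hyy hxx i hi).1,
              (DiCycle.glue_pair_lt hq1 hq1' hyy hxx j hj).1] at hij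
            have := congrArg Fin.val (hPinj hij); simp only at this
            exact Fin.ext (by omega)
          · exact absurd hij (key i j hi (by omega))
          · exact absurd hij.symm (key j i hj (by omega))
          · rw [(DiCycle.glue_pair_ge hq1 hq1' hyy hxx i (by omega)).1,
              (DiCycle.glue_pair_ge hq1 hq1' hyy hxx j (by omega)).1] at hij
            have := congrArg Fin.val (hPinj' hij); simp only at this
            exact Fin.ext (by omega)
        · -- arcs of D
          intro i
          have hiq : i.val < P.q + P'.q := i.isLt
          by_cases hi : i.val < P.q
          · obtain ⟨e1, e2⟩ := DiCycle.glue_pair_lt hq1 hq1' hyy hxx i hi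
            rw [e1, e2]
            exact (harcP ⟨i.val, hi⟩).1
          · obtain ⟨e1, e2⟩ := DiCycle.glue_pair_ge hq1 hq1' hyy hxx i (by omega)
            rw [e1, e2]
            exact (harcP' ⟨i.val - P.q, by omega⟩).1
      · -- weak cycle
        refine ⟨x, ⟨⟨0, by show 0 < P.q + P'.q; omega⟩, ?_⟩,
          y, ⟨⟨P.q, by show P.q < P.q + P'.q; omega⟩, ?_⟩, hxy,
          P, P', ⟨⟨hq1, harcP, hmonoP⟩, hPf, hPl, hPinj⟩,
          ⟨⟨hq1', harcP', hmonoP'⟩, hPf', hPl', hPinj'⟩, ?_⟩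
        · show (if h : (0 : ℕ) < P.q then P.v ⟨0, by omega⟩ else _) = x
          rw [dif_pos (by omega : (0:ℕ) < P.q), ← hPf]
          exact congrArg P.v (Fin.ext (by simp))
        · show (if h : P.q < P.q then _ else P'.v ⟨P.q - P.q, by omega⟩) = y
          rw [dif_neg (lt_irrefl P.q), ← hPf']
          exact congrArg P'.v (Fin.ext (by simp))
        · ext p
          constructor
          · rintro (⟨k, rfl⟩ | ⟨k, rfl⟩)
            · refine ⟨⟨k.val, by show k.val < P.q + P'.q; have := k.isLt; omega⟩, ?_⟩
              obtain ⟨e1, e2⟩ := DiCycle.glue_pair_lt hq1 hq1' hyy hxx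
                ⟨k.val, by have := k.isLt; omega⟩ k.isLt
              exact Prod.ext e1.symm e2.symm
            · refine ⟨⟨P.q + k.val, by show P.q + k.val < P.q + P'.q; have := k.isLt; omega⟩, ?_⟩
              obtain ⟨e1, e2⟩ := DiCycle.glue_pair_ge hq1 hq1' hyy hxx
                ⟨P.q + k.val, by have := k.isLt; omega⟩ (by simp)
              refine Eq.trans ?_ (Prod.ext (x := (_, _)) e1.symm e2.symm)
              have hkq : k.val < P'.q := k.isLt
              refine Prod.ext ?_ ?_ <;>
                exact congrArg P'.v (Fin.ext
                  (by simp only [Fin.coe_castSucc, Fin.val_succ]; omega))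
          · rintro ⟨i, rfl⟩
            have hiq : i.val < P.q + P'.q := i.isLt
            by_cases hi : i.val < P.q
            · left
              obtain ⟨e1, e2⟩ := DiCycle.glue_pair_lt hq1 hq1' hyy hxx i hi
              exact ⟨⟨i.val, hi⟩, by rw [e1, e2]; rfl⟩
            · right
              obtain ⟨e1, e2⟩ := DiCycle.glue_pair_ge hq1 hq1' hyy hxx i (by omega)
              exact ⟨⟨i.val - P.q, by omega⟩, by rw [e1, e2]; rfl⟩
    · -- shared interior vertex: recurse
      push_neg at hsep
      obtain ⟨w, ⟨i, hi⟩, ⟨j, hj⟩, hwx, hwy⟩ := hsep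
      have hiq : i.val < P.q + 1 := i.isLt
      have hjq : j.val < P'.q + 1 := j.isLt
      have hi1 : 1 ≤ i.val := by
        rcases Nat.eq_zero_or_pos i.val with h0 | h0
        · exfalso; apply hwx
          rw [← hi, ← hPf]
          exact congrArg P.v (Fin.ext (by simp [h0]))
        · omega
      have hi2 : i.val < P.q := by
        rcases Nat.lt_or_ge i.val P.q with h0 | h0
        · exact h0
        · exfalso; apply hwy
          have : i = Fin.last P.q := Fin.ext (by simp [Fin.last]; omega)
          rw [← hi, this]; exact hPl
      have hj1 : 1 ≤ j.val := by
        rcases Nat.eq_zero_or_pos j.val with h0 | h0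
        · exfalso; apply hwy
          rw [← hj, ← hPf']
          exact congrArg P'.v (Fin.ext (by simp [h0]))
        · omega
      have hQ' := TWalk.sub_isPath (W := P') (a := 0) (b := j.val)
        (by omega) (by omega) ⟨hq1', harcP', hmonoP'⟩ hPinj'
      have hQ := TWalk.sub_isPath (W := P) (a := i.val) (b := P.q)
        (by omega) (by omega) ⟨hq1, harcP, hmonoP⟩ hPinj
      have ey : P'.v ⟨0, by omega⟩ = y := by
        rw [← hPf']; exact congrArg P'.v (Fin.ext (by simp))
      have ew' : P'.v ⟨j.val, by omega⟩ = w := by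
        rw [← hj]
      have ew : P.v ⟨i.val, by omega⟩ = w := by
        rw [← hi]
      have ey2 : P.v ⟨P.q, by omega⟩ = y := by
        rw [← hPl]; exact congrArg P.v (Fin.ext (by simp [Fin.last]))
      rw [ey, ew'] at hQ'
      rw [ew, ey2] at hQ
      exact ih y w (fun h => hwy h.symm) _ _ hQ' hQ
        (by show j.val - 0 + (P.q - i.val) ≤ n; omega)

end WeakCycleAux

/-- If there exist a temporal `x,y`-path and a temporal `y,x`-path
in `(D, lam)` for distinct vertices `x, y`, then some cycle of `D` is a
weak-cycle of `(D, lam)`. -/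
theorem weakCycle_of_twoWayReach (V : Type*) [Fintype V] (D : V → V → Prop)
    (lam : V → V → Finset ℕ) (hTD : IsTemporalDigraph D lam)
    (x y : V) (hxy : x ≠ y)
    (P : TWalk V) (hP : P.IsPath D lam x y)
    (P' : TWalk V) (hP' : P'.IsPath D lam y x) :
    ∃ C : DiCycle V, C.IsCycle D ∧ IsWeakCycle D lam C := by
  exact weakCycle_aux D lam (P.q + P'.q) x y hxy P P' hP hP' le_rfl
end

section
/- Let n ≥ 2 and let A be the auxiliary cycle of order n. For every vertex v of A there exists exactly one temporal v,v-path in A. Moreover, for each i with 0 ≤ i ≤ n−2, this unique temporal v_i,v_i-path is W_{v_i} = (v_i, t_i^1, v_{i+1}, t_i^2, …, v_{n−1}, t_i^{n−i}, v_0, t_i^{n−i+1}, …, t_i^n, v_i), where t_i^j = j(n−1) − i for 1 ≤ j ≤ n. -/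
variable {V : Type*}

/-- The arc relation of the directed cycle on `Fin n`: there is an arc from
`v_{i-1}` to `v_i` for each `i`, cyclically (so also from `v_{n-1}` to `v_0`). -/
def auxD (n : ℕ) : Fin n → Fin n → Prop :=
  fun u w => (u.val + 1) % n = w.val

/-- The time sets of the auxiliary cycle of order `n`, keyed by the head vertex
of the arc: `lam(e_0) = {0, n, 2n, …, (n-1)n}` on the arc into `v_0`, and
`lam(e_i) = {n-i, 2n-i, …, (n-1)n - i}` on the arc into `v_i` for `1 ≤ i ≤ n-1`. -/
def auxLam (n : ℕ) : Fin n → Fin n → Finset ℕ :=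
  fun _ w =>
    if w.val = 0 then (Finset.range n).image fun k => k * n
    else (Finset.Icc 1 (n - 1)).image fun k => k * n - w.val

/-- The temporal `v_i,v_i`-path `W_{v_i}` of the auxiliary cycle of order `n`:
it visits `v_i, v_{i+1}, …, v_{n-1}, v_0, …, v_i` and its `j`-th time
(`1`-indexed) is `t_i^j = j(n-1) - i`. -/
def auxWalk (n : ℕ) (i : Fin n) : TWalk (Fin n) where
  q := n
  v := fun j => ⟨(i.val + j.val) % n, Nat.mod_lt _ i.pos⟩
  t := fun j => (j.val + 1) * (n - 1) - i.val

/-- The underlying directed cycle `(v_0, v_1, …, v_{n-1})` of the auxiliary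
cycle of order `n`. -/
def auxCycle (n : ℕ) : DiCycle (Fin n) := ⟨n, id⟩

lemma mem_auxLam_iff {n : ℕ} (hn : 2 ≤ n) (u w : Fin n) (s : ℕ) :
    s ∈ auxLam n u w ↔ ∃ k, k ≤ n - 1 ∧ s + w.val = k * n ∧ (1 ≤ k ∨ w.val = 0) := by
  unfold auxLam
  split_ifs with h0
  · simp only [Finset.mem_image, Finset.mem_range]
    constructor
    · rintro ⟨k, hk, rfl⟩
      exact ⟨k, by omega, by simp [h0], Or.inr h0⟩
    · rintro ⟨k, hk1, hk2, -⟩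
      rw [h0] at hk2
      exact ⟨k, by omega, by simpa using hk2.symm⟩
  · simp only [Finset.mem_image, Finset.mem_Icc]
    constructor
    · rintro ⟨k, ⟨hk1, hk2⟩, rfl⟩
      refine ⟨k, hk2, ?_, Or.inl hk1⟩
      have hw : w.val ≤ k * n := le_trans (Nat.le_of_lt w.isLt) (Nat.le_mul_of_pos_left n hk1)
      exact Nat.sub_add_cancel hw
    · rintro ⟨k, hk1, hk2, hk3⟩
      have h1 : 1 ≤ k := hk3.resolve_right h0
      refine ⟨k, ⟨h1, hk1⟩, ?_⟩
      rw [← hk2]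
      simp
lemma auxWalk_isClosedPath {n : ℕ} (hn : 2 ≤ n) (i : Fin n) :
    (auxWalk n i).IsClosedPath (auxD n) (auxLam n) i := by
  have hi : i.val < n := i.isLt
  have hn1 : 1 ≤ n := by omega
  refine ⟨⟨by simp [auxWalk]; omega, ?_, ?_⟩, ?_, ?_, ?_⟩
  · intro j
    have hj : j.val < n := j.isLt
    constructor
    · show ((i.val + j.val) % n + 1) % n = (i.val + (j.val + 1)) % n
      rw [Nat.mod_add_mod, Nat.add_assoc]
    · rw [mem_auxLam_iff hn]
      show ∃ k, k ≤ n - 1 ∧ (j.val + 1) * (n - 1) - i.val + (i.val + (j.val + 1)) % n = k * n ∧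
        (1 ≤ k ∨ (i.val + (j.val + 1)) % n = 0)
      have hle : i.val ≤ (j.val + 1) * (n - 1) :=
        le_trans (by omega) (Nat.le_mul_of_pos_left (n - 1) (by omega))
      by_cases hc : i.val + j.val + 1 < n
      · refine ⟨j.val + 1, by omega, ?_, Or.inl (by omega)⟩
        rw [show i.val + (j.val + 1) = i.val + j.val + 1 from rfl, Nat.mod_eq_of_lt hc]
        zify [hle, hn1]
        ring
      · push_neg at hc
        have hw : (i.val + (j.val + 1)) % n = i.val + j.val + 1 - n := by
          rw [show i.val + (j.val + 1) = i.val + j.val + 1 from rfl,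
            Nat.mod_eq_sub_mod hc, Nat.mod_eq_of_lt (by omega)]
        refine ⟨j.val, by omega, ?_, ?_⟩
        · rw [hw]
          zify [hle, hc, hn1]
          ring
        · rw [hw]
          omega
  · intro j j' hjj
    exact Nat.sub_le_sub_right (Nat.mul_le_mul_right _ (by
      have := (Fin.le_def.mp hjj); omega)) _
  · show (⟨(i.val + (0 : Fin (n+1)).val) % n, _⟩ : Fin n) = i
    ext
    simp [Nat.mod_eq_of_lt hi]
  · show (⟨(i.val + (Fin.last n).val) % n, _⟩ : Fin n) = i
    ext
    simp [Fin.last, Nat.add_mod_right, Nat.mod_eq_of_lt hi]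
  · intro a b hab
    have h := congrArg Fin.val hab
    simp only [auxWalk, Fin.castSucc_mk, Fin.coe_castSucc] at h
    have h2 : a.val ≡ b.val [MOD n] := Nat.ModEq.add_left_cancel' i.val h
    have h3 : a.val % n = b.val % n := h2
    have ha : a.val < n := a.isLt
    have hb : b.val < n := b.isLt
    rw [Nat.mod_eq_of_lt ha, Nat.mod_eq_of_lt hb] at h3
    exact Fin.ext h3
lemma closedPath_eq_auxWalk {n : ℕ} (hn : 2 ≤ n) (i : Fin n) (W : TWalk (Fin n))
    (hW : W.IsClosedPath (auxD n) (auxLam n) i) : W = auxWalk n i := by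
  obtain ⟨q, v, t⟩ := W
  obtain ⟨⟨hq1, harc, hmono⟩, hfirst, hlast, hinj⟩ := hW
  have hn1 : 1 ≤ n := by omega
  have hilt : i.val < n := i.isLt
  have hv : ∀ m (hm : m ≤ q), (v ⟨m, by omega⟩).val = (i.val + m) % n := by
    intro m
    induction m with
    | zero =>
      intro hm
      have h0 : (0 : Fin (q + 1)) = ⟨0, by omega⟩ := by ext; simp
      have h1 : v ⟨0, by omega⟩ = i := by rw [← h0]; exact hfirst
      rw [h1]
      simp [Nat.mod_eq_of_lt i.isLt]
    | succ m ih =>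
      intro hm
      have hm' : m < q := by omega
      have h1 := (harc ⟨m, hm'⟩).1
      simp only [auxD, Fin.castSucc_mk, Fin.succ_mk] at h1
      rw [ih (by omega)] at h1
      rw [← h1, Nat.mod_add_mod, Nat.add_assoc]
  have hqn : q ≤ n := by
    have := Fintype.card_le_of_injective _ hinj
    simpa using this
  have hlast' : (i.val + q) % n = i.val := by
    have h1 : v ⟨q, by omega⟩ = i := hlast
    rw [← hv q (le_refl q), h1]
  have hqeq : n = q := by
    symm
    have h2 : (i.val + q % n) % n = i.val := by
      conv at hlast' => lhs; rw [Nat.add_mod, Nat.mod_eq_of_lt i.isLt]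
      exact hlast'
    have hrn : q % n < n := Nat.mod_lt _ (by omega)
    have hr0 : q % n = 0 := by
      rcases Nat.lt_or_ge (i.val + q % n) n with hlt | hge
      · rw [Nat.mod_eq_of_lt hlt] at h2; omega
      · rw [Nat.mod_eq_sub_mod hge, Nat.mod_eq_of_lt (by omega)] at h2
        have := i.isLt
        omega
    have : n ∣ q := Nat.dvd_of_mod_eq_zero hr0
    have := Nat.le_of_dvd (by exact hq1) this
    omega
  subst hqeq
  have hmem : ∀ m (hm : m < n), ∃ k, k ≤ n - 1 ∧
      t ⟨m, hm⟩ + (i.val + m + 1) % n = k * n ∧ (1 ≤ k ∨ (i.val + m + 1) % n = 0) := by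
    intro m hm
    have h1 := (harc ⟨m, hm⟩).2
    rw [mem_auxLam_iff hn] at h1
    have hw : (v ⟨m + 1, by omega⟩).val = (i.val + (m + 1)) % n := hv (m + 1) (by omega)
    simp only [Fin.succ_mk] at h1
    rw [hw] at h1
    exact h1
  choose k hk1 hk2 hk3 using hmem
  set c : ℕ → ℕ := fun m => if hm : m < n then k m hm + (i.val + m + 1) / n else 0 with hcdef
  have hceq : ∀ m (hm : m < n), c m = k m hm + (i.val + m + 1) / n := by
    intro m hm
    simp only [hcdef, dif_pos hm]
  have hS : ∀ m (hm : m < n), t ⟨m, hm⟩ + (i.val + m + 1) = c m * n := by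
    intro m hm
    rw [hceq m hm, add_mul]
    have h1 := hk2 m hm
    have h2 := Nat.div_add_mod (i.val + m + 1) n
    zify at h1 h2 ⊢
    linear_combination h1 - h2
  have hmono' : ∀ m (hm : m + 1 < n), c m < c (m + 1) := by
    intro m hm
    have hm0 : m < n := by omega
    have h1 := hS m hm0
    have h2 := hS (m + 1) hm
    have ht : t ⟨m, hm0⟩ ≤ t ⟨m + 1, hm⟩ :=
      hmono ⟨m, hm0⟩ ⟨m + 1, hm⟩ (by simp [Fin.mk_le_mk])
    have h3 : c m * n < c (m + 1) * n := by
      have hx : i.val + (m + 1) + 1 = i.val + m + 2 := by omega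
      rw [hx] at h2
      linarith
    exact Nat.lt_of_mul_lt_mul_right h3
  have hchain : ∀ b, b < n → ∀ a, a ≤ b → c a + (b - a) ≤ c b := by
    intro b
    induction b with
    | zero =>
      intro _ a ha
      have : a = 0 := by omega
      subst this; simp
    | succ b ih =>
      intro hb a ha
      rcases Nat.lt_or_ge a (b + 1) with h | h
      · have h1 := ih (by omega) a (by omega)
        have h2 := hmono' b hb
        omega
      · have : a = b + 1 := by omega
        subst this; simp
  have hub : c (n - 1) ≤ n := by
    have hnn : n - 1 < n := by omega
    rw [hceq (n - 1) hnn]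
    have hx : i.val + (n - 1) + 1 = i.val + n := by omega
    rw [hx, Nat.add_div_right _ (by omega), Nat.div_eq_of_lt i.isLt]
    have := hk1 (n - 1) hnn
    omega
  have hlb : 1 ≤ c 0 := by
    have h0n : (0 : ℕ) < n := by omega
    rw [hceq 0 h0n]
    rcases hk3 0 h0n with h | h
    · exact le_trans h (Nat.le_add_right _ _)
    · have hx : i.val + 0 + 1 = n := by
        rcases Nat.lt_or_ge (i.val + 0 + 1) n with hlt | hge
        · rw [Nat.mod_eq_of_lt hlt] at h; omega
        · have := i.isLt; omega
      rw [hx, Nat.div_self (by omega)]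
      omega
  have hcval : ∀ m, m < n → c m = m + 1 := by
    intro m hm
    have h1 := hchain m hm 0 (by omega)
    have h2 := hchain (n - 1) (by omega) m (by omega)
    omega
  have htval : ∀ m (hm : m < n), t ⟨m, hm⟩ = (m + 1) * (n - 1) - i.val := by
    intro m hm
    have h := hS m hm
    rw [hcval m hm] at h
    have hle : i.val ≤ (m + 1) * (n - 1) :=
      le_trans (by omega) (Nat.le_mul_of_pos_left (n - 1) (by omega))
    zify [hle, hn1] at h ⊢
    linear_combination h
  show TWalk.mk n v t = auxWalk n i
  unfold auxWalk
  congr 1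
  · funext j
    apply Fin.ext
    exact hv j.val (by omega)
  · funext j
    exact htval j.val j.isLt

/-- In the auxiliary cycle of order `n ≥ 2`, every vertex `v`
admits exactly one temporal `v,v`-path; moreover, for every `i ≤ n-2`, this
unique temporal `v_i,v_i`-path is `W_{v_i}` with times `t_i^j = j(n-1) - i`. -/
theorem auxCycle_unique_closed_paths (n : ℕ) (hn : 2 ≤ n) :
    (∀ v : Fin n, ∃! W : TWalk (Fin n), W.IsClosedPath (auxD n) (auxLam n) v) ∧
    ∀ i : Fin n, i.val ≤ n - 2 →
      (auxWalk n i).IsClosedPath (auxD n) (auxLam n) i ∧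
      ∀ W : TWalk (Fin n), W.IsClosedPath (auxD n) (auxLam n) i → W = auxWalk n i := by
  constructor
  · intro v
    exact ⟨auxWalk n v, auxWalk_isClosedPath hn v,
      fun W hW => closedPath_eq_auxWalk hn v W hW⟩
  · intro i _
    exact ⟨auxWalk_isClosedPath hn i, fun W hW => closedPath_eq_auxWalk hn i W hW⟩
end

section
/- Let n ≥ 2 and let A be the auxiliary cycle of order n. For all indices i ≠ k with 0 ≤ i, k ≤ n−2, the unique temporal v_i,v_i-path W_{v_i} and the unique temporal v_k,v_k-path W_{v_k} share no temporal arc, i.e., there is no arc e of A and time t with t ∈ λ(e) that is used (as a pair (e, t)) by both paths. -/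
variable {V : Type*}

/-- In the auxiliary cycle of order `n ≥ 2`, for indices
`i ≠ k` with `i, k ≤ n-2`, the temporal paths `W_{v_i}` and `W_{v_k}` share no
temporal arc. -/
theorem auxWalks_share_no_temporal_arc (n : ℕ) (hn : 2 ≤ n) (i k : Fin n)
    (hi : i.val ≤ n - 2) (hk : k.val ≤ n - 2) (hik : i ≠ k) :
    ∀ p : (Fin n × Fin n) × ℕ,
      p ∈ (auxWalk n i).tarcs → p ∉ (auxWalk n k).tarcs := by
  intro p hp hp'
  obtain ⟨j, rfl⟩ := hp
  obtain ⟨j', heq⟩ := hp'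
  have ht : (j.val + 1) * (n - 1) - i.val = (j'.val + 1) * (n - 1) - k.val := by
    have := congrArg Prod.snd heq
    simpa [auxWalk] using this
  have hik' : i.val ≠ k.val := fun h => hik (Fin.ext h)
  have h1 : n - 1 ≤ (j.val + 1) * (n - 1) := Nat.le_mul_of_pos_left _ (by omega)
  have h2 : n - 1 ≤ (j'.val + 1) * (n - 1) := Nat.le_mul_of_pos_left _ (by omega)
  have hE : (j.val + 1) * (n - 1) + k.val = (j'.val + 1) * (n - 1) + i.val := by omega
  rcases lt_trichotomy j.val j'.val with h | h | h
  · have : (j.val + 2) * (n - 1) ≤ (j'.val + 1) * (n - 1) :=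
      Nat.mul_le_mul_right _ (by omega)
    have : (j.val + 1) * (n - 1) + (n - 1) ≤ (j'.val + 1) * (n - 1) := by
      nlinarith
    omega
  · rw [h] at hE; omega
  · have : (j'.val + 2) * (n - 1) ≤ (j.val + 1) * (n - 1) :=
      Nat.mul_le_mul_right _ (by omega)
    have : (j'.val + 1) * (n - 1) + (n - 1) ≤ (j.val + 1) * (n - 1) := by
      nlinarith
    omega
end

section
/- For every n ≥ 2, the underlying directed cycle (v_0, v_1, …, v_{n−1}) of the auxiliary cycle of order n is a strong-cycle of the auxiliary cycle, i.e., every vertex v_i admits a temporal v_i,v_i-path using exactly the arc set of the cycle. -/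
variable {V : Type*}

private lemma modval (n m : ℕ) (_hn : 0 < n) (h : m < 2 * n) :
    m % n = if m < n then m else m - n := by
  split
  · exact Nat.mod_eq_of_lt ‹_›
  · rw [Nat.mod_eq_sub_mod (by omega), Nat.mod_eq_of_lt (by omega)]

private lemma mem_auxLam (n a b : ℕ) (hn : 2 ≤ n) (ha : a < n) (hb : b < n)
    (u w : Fin n) (hw : w.val = (a + (b + 1)) % n) :
    (b + 1) * (n - 1) - a ∈ auxLam n u w := by
  have hm : (a + (b + 1)) % n = if a + (b + 1) < n then a + (b + 1)
      else a + (b + 1) - n := modval n _ (by omega) (by omega)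
  unfold auxLam
  rw [hw]
  by_cases h0 : (a + (b + 1)) % n = 0
  · rw [if_pos h0]
    have hab : a + (b + 1) = n := by rw [h0] at hm; split at hm <;> omega
    simp only [Finset.mem_image, Finset.mem_range]
    refine ⟨n - 1 - a, by omega, ?_⟩
    have h1 : a ≤ (b + 1) * (n - 1) :=
      le_trans (by omega : a ≤ 1 * (n - 1)) (Nat.mul_le_mul_right _ (by omega))
    zify [h1, show a ≤ n - 1 by omega, show 1 ≤ n by omega]
    have hb' : (b : ℤ) + 1 = n - a := by omega
    linear_combination (1 - (n : ℤ)) * hb'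
  · rw [if_neg h0]
    simp only [Finset.mem_image, Finset.mem_Icc]
    by_cases hcase : a + (b + 1) < n
    · refine ⟨b + 1, ⟨by omega, by omega⟩, ?_⟩
      have h1 : a + (b + 1) ≤ (b + 1) * n :=
        le_trans (by omega : a + (b + 1) ≤ 1 * n) (Nat.mul_le_mul_right _ (by omega))
      have h2 : a ≤ (b + 1) * (n - 1) :=
        le_trans (by omega : a ≤ 1 * (n - 1)) (Nat.mul_le_mul_right _ (by omega))
      rw [hm, if_pos hcase]
      zify [h1, h2, show 1 ≤ n by omega]
      ring
    · have hb1 : 1 ≤ b := by split at hm <;> omega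
      refine ⟨b, ⟨hb1, by omega⟩, ?_⟩
      have h1 : a + (b + 1) - n ≤ b * n :=
        le_trans (by omega : a + (b + 1) - n ≤ 1 * n) (Nat.mul_le_mul_right _ hb1)
      have h2 : a ≤ (b + 1) * (n - 1) :=
        le_trans (by omega : a ≤ 1 * (n - 1)) (Nat.mul_le_mul_right _ (by omega))
      rw [hm, if_neg hcase]
      zify [h1, h2, show n ≤ a + (b + 1) by omega, show 1 ≤ n by omega]
      ring

/-- For every `n ≥ 2`, the underlying directed cycle
`(v_0, …, v_{n-1})` of the auxiliary cycle of order `n` is a cycle of the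
underlying digraph and a strong-cycle of the auxiliary cycle. -/
theorem auxCycle_isStrongCycle (n : ℕ) (hn : 2 ≤ n) :
    (auxCycle n).IsCycle (auxD n) ∧
    IsStrongCycle (auxD n) (auxLam n) (auxCycle n) := by
  have hn0 : 0 < n := by omega
  constructor
  · exact ⟨hn, fun a b h => h, fun i => rfl⟩
  · rintro x -
    have hq : (auxWalk n x).q = n := rfl
    have hx : x.val < n := x.isLt
    refine ⟨auxWalk n x,
      ⟨⟨by omega, fun j => ?_, fun j k hjk => ?_⟩, ?_, ?_, ?_⟩, ?_⟩
    · constructor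
      · show ((x.val + j.val) % n + 1) % n = (x.val + (j.val + 1)) % n
        rw [Nat.mod_add_mod]; ring_nf
      · exact mem_auxLam n x.val j.val hn hx (by omega) _ _ rfl
    · show (j.val + 1) * (n - 1) - x.val ≤ (k.val + 1) * (n - 1) - x.val
      have : (j.val + 1) * (n - 1) ≤ (k.val + 1) * (n - 1) :=
        Nat.mul_le_mul_right _ (by exact_mod_cast Nat.succ_le_succ hjk)
      omega
    · show (⟨(x.val + (0 : Fin (n + 1)).val) % n, _⟩ : Fin n) = x
      exact Fin.ext (by simp [Nat.mod_eq_of_lt hx])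
    · show (⟨(x.val + (Fin.last n).val) % n, _⟩ : Fin n) = x
      exact Fin.ext (by simp [Fin.last, Nat.add_mod_right, Nat.mod_eq_of_lt hx])
    · intro j k h
      have h' : (x.val + j.val) % n = (x.val + k.val) % n := congrArg Fin.val h
      have hj : j.val < n := by omega
      have hk : k.val < n := by omega
      have e1 := modval n (x.val + j.val) hn0 (by omega)
      have e2 := modval n (x.val + k.val) hn0 (by omega)
      have : j.val = k.val := by
        rw [e1, e2] at h'; split at h' <;> split at h' <;> omega
      exact Fin.ext this
    · ext p
      simp only [TWalk.arcs, DiCycle.arcs, Set.mem_setOf_eq]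
      constructor
      · rintro ⟨j, rfl⟩
        refine ⟨⟨(x.val + j.val) % n, Nat.mod_lt _ hn0⟩, ?_⟩
        have hmod : ((x.val + j.val) % n + 1) % n = (x.val + (j.val + 1)) % n := by
          rw [Nat.mod_add_mod]; ring_nf
        simp only [auxCycle, DiCycle.next, auxWalk, Prod.mk.injEq, id]
        exact ⟨rfl, Fin.ext hmod.symm⟩
      · rintro ⟨a, rfl⟩
        have hav : a.val < n := a.isLt
        refine ⟨⟨(a.val + (n - x.val)) % n, Nat.mod_lt _ hn0⟩, ?_⟩
        have key : (x.val + (a.val + (n - x.val)) % n) % n = a.val := by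
          rw [Nat.add_mod_mod, show x.val + (a.val + (n - x.val)) = a.val + n by omega,
            Nat.add_mod_right, Nat.mod_eq_of_lt hav]
        have key2 : (x.val + ((a.val + (n - x.val)) % n + 1)) % n = (a.val + 1) % n := by
          rw [show x.val + ((a.val + (n - x.val)) % n + 1)
              = (x.val + (a.val + (n - x.val)) % n) + 1 by ring, ← Nat.mod_add_mod, key]
        simp only [auxCycle, DiCycle.next, auxWalk, Prod.mk.injEq, id]
        exact Prod.ext (Fin.ext key).symm (Fin.ext key2).symm
end

section
/- For every finite simple directed graph D there exists a temporization λ assigning exactly one natural-number time to each arc of D (the lexicographic temporization with respect to any linear order on the vertices) such that every (non-strict) temporal path in (D, λ) has length at most two. -/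
variable {V : Type*}

/-- Every finite simple digraph admits a temporization assigning
exactly one time to each arc such that every (non-strict) temporal path has
length at most two. -/
theorem exists_temporization_paths_length_le_two (V : Type*) [Fintype V]
    [DecidableEq V] (D : V → V → Prop) (hloop : ∀ u, ¬ D u u) :
    ∃ lam : V → V → ℕ,
      ∀ W : TWalk V, W.IsWalk D (fun u w => {lam u w}) →
        Function.Injective W.v → W.q ≤ 2 := by
  classical
  set n := Fintype.card V with hn
  let e := Fintype.equivFin V
  set r : V → ℕ := fun v => (e v).val with hr
  have hrlt : ∀ v, r v < n := fun v => (e v).isLt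
  have hrinj : ∀ u w : V, u ≠ w → r u ≠ r w := by
    intro u w huw h
    exact huw (e.injective (Fin.ext h))
  refine ⟨fun u w => if r u < r w then n - r w else n + r w, ?_⟩
  intro W hw hinj
  by_contra h
  have hq : 3 ≤ W.q := by omega
  have h01 : (1:ℕ) < W.q + 1 := by omega
  -- the four consecutive vertices
  set a := W.v ⟨0, by omega⟩ with ha
  set b := W.v ⟨1, by omega⟩ with hb
  set c := W.v ⟨2, by omega⟩ with hc
  set d := W.v ⟨3, by omega⟩ with hd
  have hab : a ≠ b := fun h' => by simpa using Fin.val_eq_of_eq (hinj h')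
  have hbc : b ≠ c := fun h' => by simpa using Fin.val_eq_of_eq (hinj h')
  have hcd : c ≠ d := fun h' => by simpa using Fin.val_eq_of_eq (hinj h')
  have h0 := (hw.2.1 ⟨0, by omega⟩).2
  have h1 := (hw.2.1 ⟨1, by omega⟩).2
  have h2 := (hw.2.1 ⟨2, by omega⟩).2
  have ht01 := hw.2.2 ⟨0, by omega⟩ ⟨1, by omega⟩ (by simp [Fin.le_def])
  have ht12 := hw.2.2 ⟨1, by omega⟩ ⟨2, by omega⟩ (by simp [Fin.le_def])
  simp only [Finset.mem_singleton, Fin.castSucc_mk, Fin.succ_mk] at h0 h1 h2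
  rw [show W.v ⟨0+1, by omega⟩ = b from rfl] at h0
  have e0 : W.t ⟨0, by omega⟩ = if r a < r b then n - r b else n + r b := h0
  have e1 : W.t ⟨1, by omega⟩ = if r b < r c then n - r c else n + r c := h1
  have e2 : W.t ⟨2, by omega⟩ = if r c < r d then n - r d else n + r d := h2
  have hb' := hrlt b
  have hc' := hrlt c
  have hd' := hrlt d
  have hab' := hrinj a b hab
  have hbc' := hrinj b c hbc
  have hcd' := hrinj c d hcd
  by_cases p1 : r a < r b <;> by_cases p2 : r b < r c <;> by_cases p3 : r c < r d <;>
    simp only [p1, p2, p3, if_pos, if_neg, if_true, if_false] at e0 e1 e2 <;> omega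
end

section
/- Let D be a finite simple directed graph containing no cycle of length 2 (no pair of vertices u, v with both arcs (u, v) and (v, u)). Then there exists a temporization λ assigning to each arc of D a nonempty finite set of natural-number times such that the temporal digraph (D, λ) contains no simple-cycle. -/
variable {V : Type*}

/-- If a finite simple digraph `D` has no cycle of length 2
(no digon), then there is a temporization assigning a nonempty finite set of
times to each arc such that `(D, lam)` contains no simple-cycle. -/
theorem simple_acyclic_temporization_of_no_digon (V : Type*) [Fintype V]
    (D : V → V → Prop) (hloop : ∀ u, ¬ D u u)
    (hdigon : ∀ u w, D u w → ¬ D w u) :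
    ∃ lam : V → V → Finset ℕ, (∀ u w, D u w → (lam u w).Nonempty) ∧
      ¬ ∃ C : DiCycle V, C.IsCycle D ∧ IsSimpleCycle D lam C := by
  classical
  obtain ⟨e⟩ : Nonempty (V ≃ Fin (Fintype.card V)) := ⟨Fintype.equivFin V⟩
  set f : V → ℕ := fun v => (e v : ℕ) with hfdef
  have hf : Function.Injective f := by
    intro a b h
    exact e.injective (Fin.ext h)
  refine ⟨fun u w => {if f u < f w then 2 * f w else 2 * f u - 1},
    fun u w _ => Finset.singleton_nonempty _, ?_⟩
  rintro ⟨C, hC, x, hx, P, hP, -⟩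
  obtain ⟨q, v, t⟩ := P
  obtain ⟨⟨hq1, harc, hmono⟩, hfirst, hlast, hinj⟩ := hP
  simp only [TWalk.first, TWalk.last] at hfirst hlast
  replace hq1 : 1 ≤ q := hq1
  -- basic facts with explicit indices
  have hD : ∀ (i : ℕ) (hi : i < q), D (v ⟨i, by omega⟩) (v ⟨i + 1, by omega⟩) :=
    fun i hi => (harc ⟨i, hi⟩).1
  have hv0 : v 0 = v ⟨0, by omega⟩ := by congr 1
  have hvlast : v (Fin.last q) = v ⟨q, by omega⟩ := rfl
  rcases Nat.lt_or_ge q 3 with h3 | h3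
  · -- q = 1 or q = 2 : loop or digon
    rcases (by omega : q = 1 ∨ q = 2) with h | h
    · subst h
      have h01 := hD 0 (by omega)
      have hv1 : v ⟨1, by omega⟩ = v ⟨0, by omega⟩ := by
        rw [show (⟨1, by omega⟩ : Fin 2) = Fin.last 1 from rfl, hlast, ← hfirst, hv0]
      rw [hv1] at h01
      exact hloop _ h01
    · subst h
      have h01 := hD 0 (by omega)
      have h12 := hD 1 (by omega)
      have hv2 : v ⟨2, by omega⟩ = v ⟨0, by omega⟩ := by
        rw [show (⟨2, by omega⟩ : Fin 3) = Fin.last 2 from rfl, hlast, ← hfirst, hv0]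
      rw [hv2] at h12
      exact hdigon _ _ h01 h12
  · -- main case : q ≥ 3
    set g : ℕ → ℕ := fun i => f (v ⟨min i q, by omega⟩) with hg
    have hgdef : ∀ (i : ℕ) (hi : i ≤ q), g i = f (v ⟨i, by omega⟩) := by
      intro i hi
      simp only [hg]
      congr 2
      exact Fin.ext (by simpa using Nat.min_eq_left hi)
    have hgc : ∀ (i : ℕ) (hi : i < q), f (v (Fin.castSucc ⟨i, hi⟩)) = g i := by
      intro i hi
      rw [hgdef i (by omega)]
      rfl
    have hgs : ∀ (i : ℕ) (hi : i < q), f (v (Fin.succ ⟨i, hi⟩)) = g (i + 1) := by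
      intro i hi
      rw [hgdef (i + 1) (by omega)]
      rfl
    -- injectivity on indices < q
    have hginj : ∀ i j, i < q → j < q → g i = g j → i = j := by
      intro i j hi hj hgij
      have h1 : f (v (Fin.castSucc ⟨i, hi⟩)) = f (v (Fin.castSucc ⟨j, hj⟩)) := by
        rw [hgc i hi, hgc j hj, hgij]
      have h2 := hinj (hf h1)
      exact congrArg Fin.val h2
    have hgq : g q = g 0 := by
      rw [hgdef q le_rfl, hgdef 0 (by omega), ← hvlast, ← hv0, hlast, hfirst]
    -- distinct consecutive values
    have hne : ∀ (i : ℕ), i < q → g i ≠ g (i + 1) := by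
      intro i hi h
      rw [hgdef i (by omega), hgdef (i + 1) (by omega)] at h
      have h2 := hf h
      have h3 := hD i hi
      rw [h2] at h3
      exact hloop _ h3
    -- times as a function on ℕ
    set T : ℕ → ℕ := fun i => if h : i < q then t ⟨i, h⟩ else 0 with hT
    have hTmono : ∀ i j, j < q → i ≤ j → T i ≤ T j := by
      intro i j hj hij
      simp only [hT]
      rw [dif_pos (show i < q by omega), dif_pos hj]
      exact hmono ⟨i, by show i < q; omega⟩ ⟨j, hj⟩ hij
    have hTdef : ∀ (i : ℕ) (hi : i < q),
        T i = if g i < g (i + 1) then 2 * g (i + 1) else 2 * g i - 1 := by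
      intro i hi
      simp only [hT]
      rw [dif_pos hi]
      have hm := (harc ⟨i, hi⟩).2
      simp only [Finset.mem_singleton] at hm
      rw [hm, hgc i hi, hgs i hi]
    -- no descending arc at a position ≥ 1
    have hup : ∀ (i : ℕ), 1 ≤ i → i < q → g i < g (i + 1) := by
      intro i h1 hi
      by_contra hdn
      have hdn' : g (i + 1) < g i := by
        have := hne i hi
        omega
      have hti : T i = 2 * g i - 1 := by rw [hTdef i hi, if_neg (by omega)]
      have hmle := hTmono (i - 1) i hi (by omega)
      have htp := hTdef (i - 1) (by omega)
      rw [show i - 1 + 1 = i from by omega] at htp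
      have hnep := hne (i - 1) (by omega)
      rw [show i - 1 + 1 = i from by omega] at hnep
      by_cases hc : g (i - 1) < g i
      · rw [if_pos hc] at htp
        omega
      · rw [if_neg hc] at htp
        omega
    -- chain of increases
    have chain : ∀ (d i : ℕ), 1 ≤ i → i + d ≤ q → g i ≤ g (i + d) := by
      intro d
      induction d with
      | zero => intro i _ _; exact le_rfl
      | succ n ih =>
        intro i h1 h
        have ha := ih i h1 (by omega)
        have hb := hup (i + n) (by omega) (by omega)
        show g i ≤ g (i + n + 1)
        omega
    have hchain1q : g 1 ≤ g q := by
      have := chain (q - 1) 1 le_rfl (by omega)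
      rw [show 1 + (q - 1) = q from by omega] at this
      exact this
    by_cases h01 : g 0 < g 1
    · omega
    · -- descending first arc
      have hne0 : g 0 ≠ g 1 := by have := hne 0 (by omega); simpa using this
      have hdn : g 1 < g 0 := by omega
      have ht0 : T 0 = 2 * g 0 - 1 := by
        rw [hTdef 0 (by omega), if_neg (show ¬ g 0 < g 1 by omega)]
      have ht1 : T 1 = 2 * g 2 := by
        rw [hTdef 1 (by omega), if_pos (hup 1 le_rfl (by omega))]
      have hmle := hTmono 0 1 (by omega) (by omega)
      have h02 : g 0 ≤ g 2 := by omega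
      have hchain2q : g 2 ≤ g q := by
        have := chain (q - 2) 2 (by omega) (by omega)
        rw [show 2 + (q - 2) = q from by omega] at this
        exact this
      have hg02 : g 0 = g 2 := by omega
      have := hginj 0 2 (by omega) (by omega) hg02
      omega
end

section
/- Let D be a finite simple directed graph in which every cycle has length at least 5 (girth at least 5). Then there exists a temporization λ assigning to each arc of D a nonempty finite set of natural-number times such that the temporal digraph (D, λ) contains no weak-cycle. -/
variable {V : Type*}

/-- If every cycle of a finite simple digraph `D` has length at
least 5 (girth at least 5), then there is a temporization assigning a nonempty
finite set of times to each arc such that `(D, lam)` contains no weak-cycle. -/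
theorem weak_acyclic_temporization_of_girth_ge_five (V : Type*) [Fintype V]
    (D : V → V → Prop) (hloop : ∀ u, ¬ D u u)
    (hgirth : ∀ C : DiCycle V, C.IsCycle D → 5 ≤ C.q) :
    ∃ lam : V → V → Finset ℕ, (∀ u w, D u w → (lam u w).Nonempty) ∧
      ¬ ∃ C : DiCycle V, C.IsCycle D ∧ IsWeakCycle D lam C := by
  classical
  set n := Fintype.card V with hn
  let e := Fintype.equivFin V
  let f : V → ℕ := fun v => (e v : ℕ)
  have hf : Function.Injective f := fun a b h => e.injective (Fin.ext h)
  have hflt : ∀ v, f v < n := fun v => (e v).isLt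
  refine ⟨fun u w => {if f u < f w then 2 * n - f w else f w}, fun u w _ => Finset.singleton_nonempty _, ?_⟩
  set lam : V → V → Finset ℕ := fun u w => {if f u < f w then 2 * n - f w else f w} with hlam
  rintro ⟨C, hC, x, hx, y, hy, hxy, P, P', hP, hP', harcs⟩
  -- No temporal walk has three or more arcs.
  have key : ∀ W : TWalk V, W.IsWalk D lam → W.q ≤ 2 := by
    intro W hW
    by_contra hq
    have hq3 : 3 ≤ W.q := by omega
    obtain ⟨_, harc, hmono⟩ := hW
    set i0 : Fin W.q := ⟨0, by omega⟩
    set i1 : Fin W.q := ⟨1, by omega⟩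
    set i2 : Fin W.q := ⟨2, by omega⟩
    have e01 : i0.succ = i1.castSucc := by ext; simp [i0, i1]
    have e12 : i1.succ = i2.castSucc := by ext; simp [i1, i2]
    set a := f (W.v i0.castSucc)
    set b := f (W.v i0.succ)
    set c := f (W.v i1.succ)
    set d := f (W.v i2.succ)
    have hD0 := (harc i0).1
    have hD1 := (harc i1).1
    have hD2 := (harc i2).1
    have hne0 : W.v i0.castSucc ≠ W.v i0.succ := by
      intro h; exact hloop _ (h ▸ hD0)
    have hne1 : W.v i1.castSucc ≠ W.v i1.succ := by
      intro h; exact hloop _ (h ▸ hD1)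
    have hne2 : W.v i2.castSucc ≠ W.v i2.succ := by
      intro h; exact hloop _ (h ▸ hD2)
    have hab : a ≠ b := fun h => hne0 (hf h)
    have hbc : b ≠ c := by
      intro h
      exact hne1 (hf (show f (W.v i1.castSucc) = f (W.v i1.succ) by rw [← e01]; exact h))
    have hcd : c ≠ d := by
      intro h
      exact hne2 (hf (show f (W.v i2.castSucc) = f (W.v i2.succ) by rw [← e12]; exact h))
    have ht0 : W.t i0 = if a < b then 2 * n - b else b :=
      Finset.mem_singleton.mp (harc i0).2
    have ht1 : W.t i1 = if b < c then 2 * n - c else c := by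
      have := Finset.mem_singleton.mp (harc i1).2
      rwa [← e01] at this
    have ht2 : W.t i2 = if c < d then 2 * n - d else d := by
      have := Finset.mem_singleton.mp (harc i2).2
      rwa [← e12] at this
    have h01 : W.t i0 ≤ W.t i1 := hmono i0 i1 (by simp [i0, i1, Fin.le_def])
    have h12 : W.t i1 ≤ W.t i2 := hmono i1 i2 (by simp [i1, i2, Fin.le_def])
    have hb : b < n := hflt _
    have hc : c < n := hflt _
    have hd : d < n := hflt _
    rw [ht0, ht1] at h01
    rw [ht1, ht2] at h12
    split_ifs at h01 h12 <;> omega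
  have hPq : P.q ≤ 2 := key P hP.1
  have hP'q : P'.q ≤ 2 := key P' hP'.1
  have h5 : 5 ≤ C.q := hgirth C hC
  have choice : ∀ i : Fin C.q, ∃ j : Fin P.q ⊕ Fin P'.q,
      (C.v i, C.v (C.next i)) = (Sum.elim
        (fun j : Fin P.q => (P.v j.castSucc, P.v j.succ))
        (fun j : Fin P'.q => (P'.v j.castSucc, P'.v j.succ)) j) := by
    intro i
    have hmem : (C.v i, C.v (C.next i)) ∈ P.arcs ∪ P'.arcs := by
      rw [harcs]; exact ⟨i, rfl⟩
    rcases hmem with ⟨j, hj⟩ | ⟨j, hj⟩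
    · exact ⟨.inl j, hj⟩
    · exact ⟨.inr j, hj⟩
  set F : Fin C.q → Fin P.q ⊕ Fin P'.q := fun i => (choice i).choose with hF
  have hFinj : Function.Injective F := by
    intro x1 x2 h
    have h1 : (C.v x1, C.v (C.next x1)) = (Sum.elim
        (fun j : Fin P.q => (P.v j.castSucc, P.v j.succ))
        (fun j : Fin P'.q => (P'.v j.castSucc, P'.v j.succ)) (F x1)) :=
      (choice x1).choose_spec
    have h2 : (C.v x2, C.v (C.next x2)) = (Sum.elim
        (fun j : Fin P.q => (P.v j.castSucc, P.v j.succ))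
        (fun j : Fin P'.q => (P'.v j.castSucc, P'.v j.succ)) (F x2)) :=
      (choice x2).choose_spec
    rw [h] at h1
    have hpair : (C.v x1, C.v (C.next x1)) = (C.v x2, C.v (C.next x2)) :=
      h1.trans h2.symm
    exact hC.2.1 (congrArg Prod.fst hpair)
  have hcard := Fintype.card_le_of_injective F hFinj
  simp only [Fintype.card_fin, Fintype.card_sum] at hcard
  omega
end

section
/- Let D be a finite simple directed graph containing a cycle of length at most 3. Then for every temporization λ assigning to each arc of D a nonempty finite set of natural-number times, the temporal digraph (D, λ) contains a weak-cycle. -/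
variable {V : Type*}

section Helpers

variable (D : V → V → Prop) (lam : V → V → Finset ℕ)

/-- One-arc walk. -/
def singleW (x y : V) (t : ℕ) : TWalk V := ⟨1, ![x, y], ![t]⟩

/-- Two-arc walk. -/
def doubleW (x y z : V) (t₁ t₂ : ℕ) : TWalk V := ⟨2, ![x, y, z], ![t₁, t₂]⟩

lemma singleW_arcs (x y : V) (t : ℕ) : (singleW x y t).arcs = {(x, y)} := by
  ext p
  simp only [TWalk.arcs, singleW, Set.mem_setOf_eq, Set.mem_singleton_iff]
  constructor
  · rintro ⟨i, rfl⟩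
    fin_cases i <;> rfl
  · rintro rfl; exact ⟨0, rfl⟩

lemma doubleW_arcs (x y z : V) (t₁ t₂ : ℕ) :
    (doubleW x y z t₁ t₂).arcs = {(x, y), (y, z)} := by
  ext p
  simp only [TWalk.arcs, doubleW, Set.mem_setOf_eq, Set.mem_insert_iff,
    Set.mem_singleton_iff]
  constructor
  · rintro ⟨i, rfl⟩
    fin_cases i
    · left; rfl
    · right; rfl
  · rintro (rfl | rfl)
    · exact ⟨0, rfl⟩
    · exact ⟨1, rfl⟩

lemma singleW_isPath (x y : V) (t : ℕ) (hxy : x ≠ y) (hD : D x y)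
    (ht : t ∈ lam x y) : (singleW x y t).IsPath D lam x y := by
  refine ⟨⟨le_refl 1, ?_, ?_⟩, rfl, rfl, ?_⟩
  · intro i; fin_cases i; exact ⟨hD, ht⟩
  · intro i j _; fin_cases i; fin_cases j; exact le_refl _
  · intro i j hij
    fin_cases i <;> fin_cases j <;> simp_all [singleW] <;>
      first | rfl | (exact absurd hij hxy) | (exact absurd hij.symm hxy)

lemma doubleW_isPath (x y z : V) (t₁ t₂ : ℕ)
    (hxy : x ≠ y) (hyz : y ≠ z) (hxz : x ≠ z)
    (hD₁ : D x y) (hD₂ : D y z) (ht₁ : t₁ ∈ lam x y) (ht₂ : t₂ ∈ lam y z)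
    (hle : t₁ ≤ t₂) : (doubleW x y z t₁ t₂).IsPath D lam x z := by
  refine ⟨⟨one_le_two, ?_, ?_⟩, rfl, rfl, ?_⟩
  · intro i; fin_cases i
    · exact ⟨hD₁, ht₁⟩
    · exact ⟨hD₂, ht₂⟩
  · intro i j hij
    fin_cases i <;> fin_cases j <;> simp_all [doubleW] <;> omega
  · intro i j hij
    fin_cases i <;> fin_cases j <;> simp_all [doubleW] <;> tauto

end Helpers

/-- If a finite simple digraph `D` contains a cycle of length at
most 3, then for every temporization assigning nonempty finite time sets to the
arcs, `(D, lam)` contains a weak-cycle. -/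
theorem weakCycle_of_short_cycle (V : Type*) [Fintype V] (D : V → V → Prop)
    (hloop : ∀ u, ¬ D u u) (C₀ : DiCycle V) (hC₀ : C₀.IsCycle D) (hq : C₀.q ≤ 3)
    (lam : V → V → Finset ℕ) (hlam : ∀ u w, D u w → (lam u w).Nonempty) :
    ∃ C : DiCycle V, C.IsCycle D ∧ IsWeakCycle D lam C := by
  obtain ⟨q, v⟩ := C₀
  obtain ⟨h2, hinj, harc⟩ := hC₀
  simp only at h2 hinj harc hq
  interval_cases q
  · -- q = 2
    set a := v 0 with ha
    set b := v 1 with hb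
    have hab : D a b := by
      have := harc 0; simpa [DiCycle.next] using this
    have hba : D b a := by
      have := harc 1; simpa [DiCycle.next] using this
    have hne : a ≠ b := fun h => by
      have := hinj h; exact absurd this (by decide)
    obtain ⟨t₁, ht₁⟩ := hlam a b hab
    obtain ⟨t₂, ht₂⟩ := hlam b a hba
    refine ⟨⟨2, v⟩, ⟨le_refl _, hinj, harc⟩, a, ⟨0, rfl⟩, b, ⟨1, rfl⟩, hne,
      singleW a b t₁, singleW b a t₂,
      singleW_isPath D lam a b t₁ hne hab ht₁,
      singleW_isPath D lam b a t₂ hne.symm hba ht₂, ?_⟩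
    rw [singleW_arcs, singleW_arcs]
    ext p
    simp only [Set.mem_union, Set.mem_singleton_iff, DiCycle.arcs, Set.mem_setOf_eq]
    constructor
    · rintro (rfl | rfl)
      · exact ⟨0, by simp [DiCycle.next, ha, hb]⟩
      · exact ⟨1, by simp [DiCycle.next, ha, hb]⟩
    · rintro ⟨i, rfl⟩
      fin_cases i
      · left; simp [DiCycle.next, ha, hb]
      · right; simp [DiCycle.next, ha, hb]
  · -- q = 3
    set a := v 0 with ha
    set b := v 1 with hb
    set c := v 2 with hc
    have hab : D a b := by have := harc 0; simpa [DiCycle.next] using this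
    have hbc : D b c := by have := harc 1; simpa [DiCycle.next] using this
    have hca : D c a := by have := harc 2; simpa [DiCycle.next] using this
    have hne1 : a ≠ b := fun h => absurd (hinj h) (by decide)
    have hne2 : b ≠ c := fun h => absurd (hinj h) (by decide)
    have hne3 : a ≠ c := fun h => absurd (hinj h) (by decide)
    obtain ⟨t₁, ht₁⟩ := hlam a b hab
    obtain ⟨t₂, ht₂⟩ := hlam b c hbc
    obtain ⟨t₃, ht₃⟩ := hlam c a hca
    have harcs : (⟨3, v⟩ : DiCycle V).arcs = {(a, b), (b, c), (c, a)} := by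
      ext p
      simp only [DiCycle.arcs, Set.mem_setOf_eq, Set.mem_insert_iff,
        Set.mem_singleton_iff]
      constructor
      · rintro ⟨i, rfl⟩
        fin_cases i
        · left; simp [DiCycle.next, ha, hb, hc]
        · right; left; simp [DiCycle.next, ha, hb, hc]
        · right; right; simp [DiCycle.next, ha, hb, hc]
      · rintro (rfl | rfl | rfl)
        · exact ⟨0, by simp [DiCycle.next, ha, hb, hc]⟩
        · exact ⟨1, by simp [DiCycle.next, ha, hb, hc]⟩
        · exact ⟨2, by simp [DiCycle.next, ha, hb, hc]⟩
    refine ⟨⟨3, v⟩, ⟨by norm_num, hinj, harc⟩, ?_⟩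
    rcases le_or_gt t₁ t₂ with hle | hlt1
    · refine ⟨a, ⟨0, rfl⟩, c, ⟨2, rfl⟩, hne3,
        doubleW a b c t₁ t₂, singleW c a t₃,
        doubleW_isPath D lam a b c t₁ t₂ hne1 hne2 hne3 hab hbc ht₁ ht₂ hle,
        singleW_isPath D lam c a t₃ (Ne.symm hne3) hca ht₃, ?_⟩
      rw [doubleW_arcs, singleW_arcs, harcs]
      ext p
      simp only [Set.mem_union, Set.mem_insert_iff, Set.mem_singleton_iff]
      tauto
    rcases le_or_gt t₂ t₃ with hle | hlt2
    · refine ⟨b, ⟨1, rfl⟩, a, ⟨0, rfl⟩, Ne.symm hne1,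
        doubleW b c a t₂ t₃, singleW a b t₁,
        doubleW_isPath D lam b c a t₂ t₃ hne2 (Ne.symm hne3) (Ne.symm hne1) hbc hca ht₂ ht₃ hle,
        singleW_isPath D lam a b t₁ hne1 hab ht₁, ?_⟩
      rw [doubleW_arcs, singleW_arcs, harcs]
      ext p
      simp only [Set.mem_union, Set.mem_insert_iff, Set.mem_singleton_iff]
      tauto
    · refine ⟨c, ⟨2, rfl⟩, b, ⟨1, rfl⟩, Ne.symm hne2,
        doubleW c a b t₃ t₁, singleW b c t₂,
        doubleW_isPath D lam c a b t₃ t₁ (Ne.symm hne3) hne1 (Ne.symm hne2) hca hab ht₃ ht₁ (by omega),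
        singleW_isPath D lam b c t₂ hne2 hbc ht₂, ?_⟩
      rw [doubleW_arcs, singleW_arcs, harcs]
      ext p
      simp only [Set.mem_union, Set.mem_insert_iff, Set.mem_singleton_iff]
      tauto
end

section
/- Let (D, λ) be a temporal digraph with lifetime 2 (every λ(e) is a nonempty subset of {1, 2}). If (D, λ) contains no simple-cycle, then: (a) D contains no cycle of length 2 or 3; and (b) for every cycle C = (a, b, c, d) of length 4 in D with arcs e_1 = (a, b), e_2 = (b, c), e_3 = (c, d), e_4 = (d, a), each λ(e_i) is a singleton and λ(e_1) = λ(e_3) ≠ λ(e_2) = λ(e_4). -/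
variable {V : Type*}

lemma mkSimple {V : Type*} (D : V → V → Prop) (lam : V → V → Finset ℕ)
    (q : ℕ) (hq : 2 ≤ q) (w : Fin q → V) (hinj : Function.Injective w)
    (t : Fin q → ℕ)
    (hD : ∀ i : Fin q, D (w i) (w ⟨(i.val + 1) % q, Nat.mod_lt _ (by omega)⟩))
    (hm : ∀ i : Fin q, t i ∈ lam (w i) (w ⟨(i.val + 1) % q, Nat.mod_lt _ (by omega)⟩))
    (hmono : ∀ i j : Fin q, i ≤ j → t i ≤ t j) :
    ∃ C : DiCycle V, C.IsCycle D ∧ IsSimpleCycle D lam C := by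
  have hq0 : 0 < q := by omega
  set P : TWalk V := ⟨q, fun i => w ⟨i.val % q, Nat.mod_lt _ hq0⟩, t⟩ with hP
  have key : ∀ i : Fin q, P.v i.castSucc = w i := by
    intro i
    show w ⟨i.val % q, _⟩ = w i
    congr 1
    exact Fin.ext (Nat.mod_eq_of_lt i.isLt)
  have keys : ∀ i : Fin q, P.v i.succ = w ⟨(i.val + 1) % q, Nat.mod_lt _ hq0⟩ := by
    intro i; rfl
  have hnext : ∀ i : Fin q, (DiCycle.mk q w).next i = ⟨(i.val + 1) % q, Nat.mod_lt _ hq0⟩ := by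
    intro i; rfl
  refine ⟨⟨q, w⟩, ⟨hq, hinj, fun i => by rw [hnext]; exact hD i⟩,
    w ⟨0, hq0⟩, ⟨⟨0, hq0⟩, rfl⟩, P, ⟨⟨hq0, fun i => by rw [key, keys]; exact ⟨hD i, hm i⟩,
      hmono⟩, ?_, ?_, ?_⟩, ?_⟩
  · exact congrArg w (Fin.ext (by simp))
  · exact congrArg w (Fin.ext (by simp [Fin.last]; exact Nat.mod_self q))
  · intro i j h
    have h' : P.v (Fin.castSucc i) = P.v (Fin.castSucc j) := h
    rw [key, key] at h'
    exact hinj h'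
  · ext p
    constructor
    · rintro ⟨i, rfl⟩
      exact ⟨i, by rw [key, keys, hnext]⟩
    · rintro ⟨i, rfl⟩
      exact ⟨i, by rw [key, keys, hnext]⟩

lemma aux2 {V : Type*} (D : V → V → Prop) (lam : V → V → Finset ℕ)
    (x y : V) (hxy : x ≠ y) (hDxy : D x y) (hDyx : D y x)
    (t0 t1 : ℕ) (h0 : t0 ∈ lam x y) (h1 : t1 ∈ lam y x) (h01 : t0 ≤ t1) :
    ∃ C : DiCycle V, C.IsCycle D ∧ IsSimpleCycle D lam C := by
  apply mkSimple D lam 2 le_rfl ![x, y] ?_ ![t0, t1] ?_ ?_ ?_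
  · intro i j h; fin_cases i <;> fin_cases j <;> simp_all
  · intro i; fin_cases i <;> simpa
  · intro i; fin_cases i <;> simpa
  · intro i j hij; fin_cases i <;> fin_cases j <;>
      simp_all [Fin.le_def] <;> omega

lemma aux3 {V : Type*} (D : V → V → Prop) (lam : V → V → Finset ℕ)
    (x y z : V) (hxy : x ≠ y) (hxz : x ≠ z) (hyz : y ≠ z)
    (hDxy : D x y) (hDyz : D y z) (hDzx : D z x)
    (t0 t1 t2 : ℕ) (h0 : t0 ∈ lam x y) (h1 : t1 ∈ lam y z) (h2 : t2 ∈ lam z x)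
    (h01 : t0 ≤ t1) (h12 : t1 ≤ t2) :
    ∃ C : DiCycle V, C.IsCycle D ∧ IsSimpleCycle D lam C := by
  apply mkSimple D lam 3 (by omega) ![x, y, z] ?_ ![t0, t1, t2] ?_ ?_ ?_
  · intro i j h; fin_cases i <;> fin_cases j <;> simp_all
  · intro i; fin_cases i <;> simpa
  · intro i; fin_cases i <;> simpa
  · intro i j hij; fin_cases i <;> fin_cases j <;>
      simp_all [Fin.le_def] <;> omega

lemma aux4 {V : Type*} (D : V → V → Prop) (lam : V → V → Finset ℕ)
    (x y z u : V) (hxy : x ≠ y) (hxz : x ≠ z) (hxu : x ≠ u)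
    (hyz : y ≠ z) (hyu : y ≠ u) (hzu : z ≠ u)
    (hDxy : D x y) (hDyz : D y z) (hDzu : D z u) (hDux : D u x)
    (t0 t1 t2 t3 : ℕ) (h0 : t0 ∈ lam x y) (h1 : t1 ∈ lam y z)
    (h2 : t2 ∈ lam z u) (h3 : t3 ∈ lam u x)
    (h01 : t0 ≤ t1) (h12 : t1 ≤ t2) (h23 : t2 ≤ t3) :
    ∃ C : DiCycle V, C.IsCycle D ∧ IsSimpleCycle D lam C := by
  apply mkSimple D lam 4 (by omega) ![x, y, z, u] ?_ ![t0, t1, t2, t3] ?_ ?_ ?_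
  · intro i j h; fin_cases i <;> fin_cases j <;> simp_all
  · intro i; fin_cases i <;> simpa
  · intro i; fin_cases i <;> simpa
  · intro i j hij; fin_cases i <;> fin_cases j <;>
      simp_all [Fin.le_def] <;> omega

lemma memOne (S : Finset ℕ) (hs : S ⊆ {1, 2}) (hne : S.Nonempty) (h2 : 2 ∉ S) : 1 ∈ S := by
  obtain ⟨a, ha⟩ := hne
  have := hs ha
  simp only [Finset.mem_insert, Finset.mem_singleton] at this
  rcases this with rfl | rfl
  · exact ha
  · exact absurd ha h2

lemma eqOne (S : Finset ℕ) (hs : S ⊆ {1, 2}) (h1 : 1 ∈ S) (h2 : 2 ∉ S) : S = {1} := by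
  apply Finset.Subset.antisymm
  · intro n hn
    have := hs hn
    simp only [Finset.mem_insert, Finset.mem_singleton] at this ⊢
    rcases this with rfl | rfl
    · rfl
    · exact absurd hn h2
  · simpa

lemma eqTwo (S : Finset ℕ) (hs : S ⊆ {1, 2}) (h2 : 2 ∈ S) (h1 : 1 ∉ S) : S = {2} := by
  apply Finset.Subset.antisymm
  · intro n hn
    have := hs hn
    simp only [Finset.mem_insert, Finset.mem_singleton] at this ⊢
    rcases this with rfl | rfl
    · exact absurd hn h1
    · rfl
  · simpa

lemma times3 (S0 S1 S2 : Finset ℕ)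
    (n0 : S0.Nonempty) (n1 : S1.Nonempty) (n2 : S2.Nonempty)
    (s0 : S0 ⊆ {1, 2}) (s1 : S1 ⊆ {1, 2}) (s2 : S2 ⊆ {1, 2}) :
    (∃ a b c, a ∈ S0 ∧ b ∈ S1 ∧ c ∈ S2 ∧ a ≤ b ∧ b ≤ c) ∨
    (∃ a b c, a ∈ S1 ∧ b ∈ S2 ∧ c ∈ S0 ∧ a ≤ b ∧ b ≤ c) ∨
    (∃ a b c, a ∈ S2 ∧ b ∈ S0 ∧ c ∈ S1 ∧ a ≤ b ∧ b ≤ c) := by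
  by_cases h0 : 2 ∈ S0 <;> by_cases h1 : 2 ∈ S1 <;> by_cases h2 : 2 ∈ S2
  · exact .inl ⟨2, 2, 2, h0, h1, h2, le_rfl, le_rfl⟩
  · exact .inr (.inr ⟨1, 2, 2, memOne _ s2 n2 h2, h0, h1, le_refl 1 |>.trans one_le_two, le_rfl⟩)
  · exact .inr (.inl ⟨1, 2, 2, memOne _ s1 n1 h1, h2, h0, one_le_two, le_rfl⟩)
  · exact .inr (.inl ⟨1, 1, 2, memOne _ s1 n1 h1, memOne _ s2 n2 h2, h0, le_rfl, one_le_two⟩)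
  · exact .inl ⟨1, 2, 2, memOne _ s0 n0 h0, h1, h2, one_le_two, le_rfl⟩
  · exact .inr (.inr ⟨1, 1, 2, memOne _ s2 n2 h2, memOne _ s0 n0 h0, h1, le_rfl, one_le_two⟩)
  · exact .inl ⟨1, 1, 2, memOne _ s0 n0 h0, memOne _ s1 n1 h1, h2, le_rfl, one_le_two⟩
  · exact .inl ⟨1, 1, 1, memOne _ s0 n0 h0, memOne _ s1 n1 h1, memOne _ s2 n2 h2, le_rfl, le_rfl⟩

lemma times4 (S0 S1 S2 S3 : Finset ℕ)
    (n0 : S0.Nonempty) (n1 : S1.Nonempty) (n2 : S2.Nonempty) (n3 : S3.Nonempty)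
    (s0 : S0 ⊆ {1, 2}) (s1 : S1 ⊆ {1, 2}) (s2 : S2 ⊆ {1, 2}) (s3 : S3 ⊆ {1, 2}) :
    (∃ a b c d, a ∈ S0 ∧ b ∈ S1 ∧ c ∈ S2 ∧ d ∈ S3 ∧ a ≤ b ∧ b ≤ c ∧ c ≤ d) ∨
    (∃ a b c d, a ∈ S1 ∧ b ∈ S2 ∧ c ∈ S3 ∧ d ∈ S0 ∧ a ≤ b ∧ b ≤ c ∧ c ≤ d) ∨
    (∃ a b c d, a ∈ S2 ∧ b ∈ S3 ∧ c ∈ S0 ∧ d ∈ S1 ∧ a ≤ b ∧ b ≤ c ∧ c ≤ d) ∨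
    (∃ a b c d, a ∈ S3 ∧ b ∈ S0 ∧ c ∈ S1 ∧ d ∈ S2 ∧ a ≤ b ∧ b ≤ c ∧ c ≤ d) ∨
    (S0 = {1} ∧ S1 = {2} ∧ S2 = {1} ∧ S3 = {2}) ∨
    (S0 = {2} ∧ S1 = {1} ∧ S2 = {2} ∧ S3 = {1}) := by
  have m0 := memOne S0 s0 n0
  have m1 := memOne S1 s1 n1
  have m2 := memOne S2 s2 n2
  have m3 := memOne S3 s3 n3
  by_cases h0 : 2 ∈ S0 <;> by_cases h1 : 2 ∈ S1 <;> by_cases h2 : 2 ∈ S2 <;>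
    by_cases h3 : 2 ∈ S3
  · exact .inl ⟨2, 2, 2, 2, h0, h1, h2, h3, le_rfl, le_rfl, le_rfl⟩
  · exact .inr (.inr (.inr (.inl ⟨1, 2, 2, 2, m3 h3, h0, h1, h2, one_le_two, le_rfl, le_rfl⟩)))
  · exact .inr (.inr (.inl ⟨1, 2, 2, 2, m2 h2, h3, h0, h1, one_le_two, le_rfl, le_rfl⟩))
  · exact .inr (.inr (.inl ⟨1, 1, 2, 2, m2 h2, m3 h3, h0, h1, le_rfl, one_le_two, le_rfl⟩))
  · exact .inr (.inl ⟨1, 2, 2, 2, m1 h1, h2, h3, h0, one_le_two, le_rfl, le_rfl⟩)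
  · -- TFTF : 2∈S0, 2∉S1, 2∈S2, 2∉S3
    by_cases k2 : 1 ∈ S2
    · exact .inr (.inl ⟨1, 1, 1, 2, m1 h1, k2, m3 h3, h0, le_rfl, le_rfl, one_le_two⟩)
    · by_cases k0 : 1 ∈ S0
      · exact .inr (.inr (.inr (.inl ⟨1, 1, 1, 2, m3 h3, k0, m1 h1, h2, le_rfl, le_rfl, one_le_two⟩)))
      · exact .inr (.inr (.inr (.inr (.inr ⟨eqTwo _ s0 h0 k0, eqOne _ s1 (m1 h1) h1,
          eqTwo _ s2 h2 k2, eqOne _ s3 (m3 h3) h3⟩))))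
  · exact .inr (.inl ⟨1, 1, 2, 2, m1 h1, m2 h2, h3, h0, le_rfl, one_le_two, le_rfl⟩)
  · exact .inr (.inl ⟨1, 1, 1, 2, m1 h1, m2 h2, m3 h3, h0, le_rfl, le_rfl, one_le_two⟩)
  · exact .inl ⟨1, 2, 2, 2, m0 h0, h1, h2, h3, one_le_two, le_rfl, le_rfl⟩
  · exact .inr (.inr (.inr (.inl ⟨1, 1, 2, 2, m3 h3, m0 h0, h1, h2, le_rfl, one_le_two, le_rfl⟩)))
  · -- FTFT : 2∉S0, 2∈S1, 2∉S2, 2∈S3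
    by_cases k1 : 1 ∈ S1
    · exact .inl ⟨1, 1, 1, 2, m0 h0, k1, m2 h2, h3, le_rfl, le_rfl, one_le_two⟩
    · by_cases k3 : 1 ∈ S3
      · exact .inr (.inr (.inl ⟨1, 1, 1, 2, m2 h2, k3, m0 h0, h1, le_rfl, le_rfl, one_le_two⟩))
      · exact .inr (.inr (.inr (.inr (.inl ⟨eqOne _ s0 (m0 h0) h0, eqTwo _ s1 h1 k1,
          eqOne _ s2 (m2 h2) h2, eqTwo _ s3 h3 k3⟩))))
  · exact .inr (.inr (.inl ⟨1, 1, 1, 2, m2 h2, m3 h3, m0 h0, h1, le_rfl, le_rfl, one_le_two⟩))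
  · exact .inl ⟨1, 1, 2, 2, m0 h0, m1 h1, h2, h3, le_rfl, one_le_two, le_rfl⟩
  · exact .inr (.inr (.inr (.inl ⟨1, 1, 1, 2, m3 h3, m0 h0, m1 h1, h2, le_rfl, le_rfl, one_le_two⟩)))
  · exact .inl ⟨1, 1, 1, 2, m0 h0, m1 h1, m2 h2, h3, le_rfl, le_rfl, one_le_two⟩
  · exact .inl ⟨1, 1, 1, 1, m0 h0, m1 h1, m2 h2, m3 h3, le_rfl, le_rfl, le_rfl⟩

lemma mem12 {S : Finset ℕ} {n : ℕ} (hs : S ⊆ {1, 2}) (hn : n ∈ S) : 1 ≤ n ∧ n ≤ 2 := by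
  have := hs hn
  simp only [Finset.mem_insert, Finset.mem_singleton] at this
  rcases this with rfl | rfl <;> omega


/-- Let `(D, lam)` be a temporal digraph with lifetime 2. If
`(D, lam)` contains no simple-cycle, then (a) `D` has no cycle of length 2 or 3,
and (b) on every 4-cycle `(a, b, c, d)` all four time sets are singletons and
`lam(e₁) = lam(e₃) ≠ lam(e₂) = lam(e₄)`. -/
theorem lifetime_two_no_simpleCycle (V : Type*) [Fintype V] (D : V → V → Prop)
    (lam : V → V → Finset ℕ) (hloop : ∀ u, ¬ D u u)
    (hne : ∀ u w, D u w → (lam u w).Nonempty)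
    (htau : ∀ u w, lam u w ⊆ {1, 2})
    (hns : ¬ ∃ C : DiCycle V, C.IsCycle D ∧ IsSimpleCycle D lam C) :
    (∀ C : DiCycle V, C.IsCycle D → C.q ≠ 2 ∧ C.q ≠ 3) ∧
    ∀ a b c d : V, [a, b, c, d].Pairwise (· ≠ ·) →
      D a b → D b c → D c d → D d a →
        (lam a b).card = 1 ∧ (lam b c).card = 1 ∧ (lam c d).card = 1 ∧
        (lam d a).card = 1 ∧ lam a b = lam c d ∧ lam b c = lam d a ∧
        lam a b ≠ lam b c := by
  constructor
  · rintro ⟨q, w⟩ ⟨hq2, hinj, harc⟩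
    constructor
    · intro h2
      subst h2
      have e01 : (0 : Fin 2) ≠ 1 := by decide
      have hne01 : w 0 ≠ w 1 := fun h => e01 (hinj h)
      have hD01 : D (w 0) (w 1) := by
        have := harc 0; simpa [DiCycle.next] using this
      have hD10 : D (w 1) (w 0) := by
        have := harc 1; simpa [DiCycle.next] using this
      by_cases h : 2 ∈ lam (w 1) (w 0)
      · obtain ⟨a, ha⟩ := hne _ _ hD01
        exact hns (aux2 D lam (w 0) (w 1) hne01 hD01 hD10 a 2 ha h (mem12 (htau _ _) ha).2)
      · obtain ⟨b, hb⟩ := hne _ _ hD01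
        exact hns (aux2 D lam (w 1) (w 0) hne01.symm hD10 hD01 1 b
          (memOne _ (htau _ _) (hne _ _ hD10) h) hb (mem12 (htau _ _) hb).1)
    · intro h3
      subst h3
      have e01 : (0 : Fin 3) ≠ 1 := by decide
      have e02 : (0 : Fin 3) ≠ 2 := by decide
      have e12 : (1 : Fin 3) ≠ 2 := by decide
      have hne01 : w 0 ≠ w 1 := fun h => e01 (hinj h)
      have hne02 : w 0 ≠ w 2 := fun h => e02 (hinj h)
      have hne12 : w 1 ≠ w 2 := fun h => e12 (hinj h)
      have hD01 : D (w 0) (w 1) := by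
        have := harc 0; simpa [DiCycle.next] using this
      have hD12 : D (w 1) (w 2) := by
        have := harc 1; simpa [DiCycle.next] using this
      have hD20 : D (w 2) (w 0) := by
        have := harc 2; simpa [DiCycle.next] using this
      rcases times3 (lam (w 0) (w 1)) (lam (w 1) (w 2)) (lam (w 2) (w 0))
        (hne _ _ hD01) (hne _ _ hD12) (hne _ _ hD20)
        (htau _ _) (htau _ _) (htau _ _) with
        ⟨t0, t1, t2, m0, m1, m2, l01, l12⟩ | ⟨t0, t1, t2, m0, m1, m2, l01, l12⟩ |
        ⟨t0, t1, t2, m0, m1, m2, l01, l12⟩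
      · exact hns (aux3 D lam (w 0) (w 1) (w 2) hne01 hne02 hne12 hD01 hD12 hD20
          t0 t1 t2 m0 m1 m2 l01 l12)
      · exact hns (aux3 D lam (w 1) (w 2) (w 0) hne12 hne01.symm hne02.symm hD12 hD20 hD01
          t0 t1 t2 m0 m1 m2 l01 l12)
      · exact hns (aux3 D lam (w 2) (w 0) (w 1) hne02.symm hne12.symm hne01 hD20 hD01 hD12
          t0 t1 t2 m0 m1 m2 l01 l12)
  · intro a b c d hpw hab hbc hcd hda
    simp only [List.pairwise_cons, List.mem_cons, List.mem_singleton,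
      List.not_mem_nil, List.Pairwise.nil] at hpw
    obtain ⟨hab', hcd', hbc'⟩ :
        (a ≠ b ∧ a ≠ c ∧ a ≠ d) ∧ (b ≠ c ∧ b ≠ d) ∧ (c ≠ d) := by
      refine ⟨⟨?_, ?_, ?_⟩, ⟨?_, ?_⟩, ?_⟩ <;> first
        | exact hpw.1 _ (by simp)
        | exact hpw.2.1 _ (by simp)
        | exact hpw.2.2.1 _ (by simp)
    rcases times4 (lam a b) (lam b c) (lam c d) (lam d a)
      (hne _ _ hab) (hne _ _ hbc) (hne _ _ hcd) (hne _ _ hda)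
      (htau _ _) (htau _ _) (htau _ _) (htau _ _) with
      ⟨t0, t1, t2, t3, m0, m1, m2, m3, l01, l12, l23⟩ |
      ⟨t0, t1, t2, t3, m0, m1, m2, m3, l01, l12, l23⟩ |
      ⟨t0, t1, t2, t3, m0, m1, m2, m3, l01, l12, l23⟩ |
      ⟨t0, t1, t2, t3, m0, m1, m2, m3, l01, l12, l23⟩ |
      ⟨e0, e1, e2, e3⟩ | ⟨e0, e1, e2, e3⟩
    · exact absurd (aux4 D lam a b c d hab'.1 hab'.2.1 hab'.2.2 hcd'.1 hcd'.2 hbc'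
        hab hbc hcd hda t0 t1 t2 t3 m0 m1 m2 m3 l01 l12 l23) hns
    · exact absurd (aux4 D lam b c d a hcd'.1 hcd'.2 hab'.1.symm hbc' hab'.2.1.symm
        hab'.2.2.symm hbc hcd hda hab t0 t1 t2 t3 m0 m1 m2 m3 l01 l12 l23) hns
    · exact absurd (aux4 D lam c d a b hbc' hab'.2.1.symm hcd'.1.symm hab'.2.2.symm
        hcd'.2.symm hab'.1 hcd hda hab hbc t0 t1 t2 t3 m0 m1 m2 m3 l01 l12 l23) hns
    · exact absurd (aux4 D lam d a b c hab'.2.2.symm hcd'.2.symm hbc'.symm hab'.1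
        hab'.2.1 hcd'.1 hda hab hbc hcd t0 t1 t2 t3 m0 m1 m2 m3 l01 l12 l23) hns
    · rw [e0, e1, e2, e3]; refine ⟨rfl, rfl, rfl, rfl, rfl, rfl, by decide⟩
    · rw [e0, e1, e2, e3]; refine ⟨rfl, rfl, rfl, rfl, rfl, rfl, by decide⟩
end

section
/- Let (D, λ) be a temporal digraph with lifetime 2 (every λ(e) is a nonempty subset of {1, 2}). If (D, λ) contains no weak-cycle, then: (a) D contains no cycle on fewer than 6 vertices; and (b) for every cycle C = (a, b, c, d, e, f) of length 6 in D with arcs e_1 = (a, b), e_2 = (b, c), e_3 = (c, d), e_4 = (d, e), e_5 = (e, f), e_6 = (f, a), each λ(e_i) is a singleton and λ(e_1) = λ(e_3) = λ(e_5) ≠ λ(e_2) = λ(e_4) = λ(e_6). -/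
variable {V : Type*}

section AuxLemmas

variable {V : Type*} {D : V → V → Prop} {lam : V → V → Finset ℕ}

private lemma myMono (f : ℕ → ℕ) (a b : ℕ)
    (h : ∀ m, a ≤ m → m + 1 < b → f m ≤ f (m + 1)) :
    ∀ i j, a ≤ i → i ≤ j → j < b → f i ≤ f j := by
  intro i j hai hij hjb
  induction j with
  | zero =>
    have h0 : i = 0 := by omega
    simp [h0]
  | succ n ih =>
    rcases Nat.lt_or_ge i (n + 1) with h1 | h2
    · exact le_trans (ih (by omega) (by omega)) (h n (by omega) (by omega))
    · have h0 : i = n + 1 := by omega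
      simp [h0]

private lemma mod_small (a q : ℕ) (h0 : 0 < q) (h : a < 2 * q) :
    a % q = if a < q then a else a - q := by
  split_ifs with h1
  · exact Nat.mod_eq_of_lt h1
  · rw [Nat.mod_eq_sub_mod (by omega), Nat.mod_eq_of_lt (by omega)]

/-- The key construction: a cycle whose times split (after the cut between
`q-1` and `0`, and the cut between `k-1` and `k`) into two nondecreasing runs
is a weak cycle. Here `w` is already "rotated". -/
private lemma key_weak_rot (q k : ℕ) (hq : 2 ≤ q) (hk1 : 1 ≤ k) (hkq : k < q)
    (w : ℕ → V) (t : ℕ → ℕ) (hper : w q = w 0)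
    (hinj : ∀ i j, i < q → j < q → w i = w j → i = j)
    (harc : ∀ i, i < q → D (w i) (w ((i + 1) % q)))
    (hmem : ∀ i, i < q → t i ∈ lam (w i) (w ((i + 1) % q)))
    (hadj : ∀ m, m + 1 < q → m + 1 ≠ k → t m ≤ t (m + 1)) :
    ∃ C : DiCycle V, C.IsCycle D ∧ IsWeakCycle D lam C := by
  have q0 : 0 < q := by omega
  have hwm : ∀ m, m < q → w ((m + 1) % q) = w (m + 1) := by
    intro m hm
    rcases Nat.lt_or_ge (m + 1) q with h | h
    · rw [Nat.mod_eq_of_lt h]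
    · have hmq : m + 1 = q := by omega
      rw [hmq, Nat.mod_self, hper]
  have hxy : w 0 ≠ w k := by
    intro h
    have := hinj 0 k q0 (by omega) h
    omega
  refine ⟨⟨q, fun i => w i.val⟩, ⟨hq, ?_, ?_⟩, w 0, ⟨⟨0, q0⟩, rfl⟩, w k,
    ⟨⟨k, hkq⟩, rfl⟩, hxy,
    ⟨k, fun i => w i.val, fun i => t i.val⟩,
    ⟨q - k, fun i => w (k + i.val), fun i => t (k + i.val)⟩, ?_, ?_, ?_⟩
  · intro i j hij
    exact Fin.ext (hinj i.val j.val i.isLt j.isLt hij)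
  · intro i
    exact harc i.val i.isLt
  -- P is a temporal path from w 0 to w k
  · refine ⟨⟨hk1, ?_, ?_⟩, rfl, rfl, ?_⟩
    · intro i
      have hik : (i : ℕ) < k := i.isLt
      have h1 : i.val + 1 < q := by omega
      have e : (i.val + 1) % q = i.val + 1 := Nat.mod_eq_of_lt h1
      constructor
      · have h2 := harc i.val (by omega)
        rwa [e] at h2
      · have h2 := hmem i.val (by omega)
        rwa [e] at h2
    · intro i j hij
      have hjk : (j : ℕ) < k := j.isLt
      have hij' : (i : ℕ) ≤ (j : ℕ) := hij
      exact myMono t 0 k (fun m _ hm => hadj m (by omega) (by omega))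
        i.val j.val (by omega) hij' hjk
    · intro i j hij
      have hik : (i : ℕ) < k + 1 := i.isLt
      have hjk : (j : ℕ) < k + 1 := j.isLt
      exact Fin.ext (hinj i.val j.val (by omega) (by omega) hij)
  -- P' is a temporal path from w k to w 0
  · refine ⟨⟨by show 1 ≤ q - k; omega, ?_, ?_⟩, rfl, ?_, ?_⟩
    · intro i
      have hik : (i : ℕ) < q - k := i.isLt
      have h1 : k + i.val < q := by omega
      constructor
      · have h2 := harc (k + i.val) h1
        rwa [hwm _ h1] at h2
      · have h2 := hmem (k + i.val) h1
        rwa [hwm _ h1] at h2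
    · intro i j hij
      have hjk : (j : ℕ) < q - k := j.isLt
      have hij' : (i : ℕ) ≤ (j : ℕ) := hij
      exact myMono t k q (fun m hm hm' => hadj m (by omega) (by omega))
        (k + i.val) (k + j.val) (by omega) (by omega) (by omega)
    · show w (k + (Fin.last (q - k)).val) = w 0
      rw [Fin.val_last, show k + (q - k) = q by omega, hper]
    · intro i j hij
      change w (k + i.val) = w (k + j.val) at hij
      have hi : (i : ℕ) < q - k + 1 := i.isLt
      have hj : (j : ℕ) < q - k + 1 := j.isLt
      by_cases h1 : k + i.val < q
      · by_cases h2 : k + j.val < q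
        · exact Fin.ext (by have := hinj _ _ h1 h2 hij; omega)
        · exfalso
          have hjq : k + j.val = q := by omega
          rw [hjq, hper] at hij
          have := hinj _ _ h1 q0 hij
          omega
      · by_cases h2 : k + j.val < q
        · exfalso
          have hiq : k + i.val = q := by omega
          rw [hiq, hper] at hij
          have := hinj _ _ q0 h2 hij
          omega
        · exact Fin.ext (by omega)
  -- the two paths use exactly the arcs of C
  · ext p
    simp only [Set.mem_union, TWalk.arcs, DiCycle.arcs, Set.mem_setOf_eq, DiCycle.next]
    constructor
    · rintro (⟨i, rfl⟩ | ⟨i, rfl⟩)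
      · have hik : (i : ℕ) < k := i.isLt
        refine ⟨⟨i.val, by omega⟩, ?_⟩
        have h1 : i.val + 1 < q := by omega
        simp [Fin.val_succ, Nat.mod_eq_of_lt h1]
      · have hik : (i : ℕ) < q - k := i.isLt
        have h1 : k + i.val < q := by omega
        refine ⟨⟨k + i.val, h1⟩, ?_⟩
        have e3 : k + ((i : ℕ) + 1) = k + (i : ℕ) + 1 := by omega
        simp [Fin.val_succ, e3, hwm _ h1]
    · rintro ⟨m, rfl⟩
      have hm : (m : ℕ) < q := m.isLt
      by_cases h1 : m.val < k
      · left
        refine ⟨⟨m.val, h1⟩, ?_⟩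
        simp [Fin.val_succ, Nat.mod_eq_of_lt (by omega : m.val + 1 < q)]
      · right
        refine ⟨⟨m.val - k, by omega⟩, ?_⟩
        have e : k + (m.val - k) = m.val := by omega
        have e2 : k + (m.val - k + 1) = m.val + 1 := by omega
        simp [Fin.val_succ, e, e2, hwm _ hm]

private lemma no_two_cuts
    (hW : ∀ C : DiCycle V, C.IsCycle D → ¬ IsWeakCycle D lam C)
    (q : ℕ) (hq : 2 ≤ q) (w : ℕ → V) (t : ℕ → ℕ)
    (hinj : ∀ i j, i < q → j < q → w i = w j → i = j)
    (harc : ∀ i, i < q → D (w i) (w ((i + 1) % q)))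
    (hmem : ∀ i, i < q → t i ∈ lam (w i) (w ((i + 1) % q)))
    (c1 c2 : ℕ) (h12 : c1 < c2) (h2q : c2 < q) :
    ∃ i, i < q ∧ i ≠ c1 ∧ i ≠ c2 ∧ t ((i + 1) % q) < t i := by
  by_contra hcon
  push_neg at hcon
  have q0 : 0 < q := by omega
  set s := c2 + 1 with hs
  set k := c1 + q - c2 with hk
  have emod : ∀ i : ℕ, ((i + 1) % q + s) % q = ((i + s) % q + 1) % q := by
    intro i
    rw [Nat.mod_add_mod, Nat.mod_add_mod]
    congr 1
    omega
  have hper' : w ((q + s) % q) = w ((0 + s) % q) := by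
    rw [Nat.add_mod_left, Nat.zero_add]
  have hinj' : ∀ i j, i < q → j < q →
      w ((i + s) % q) = w ((j + s) % q) → i = j := by
    intro i j hi hj hij
    have h := hinj _ _ (Nat.mod_lt _ q0) (Nat.mod_lt _ q0) hij
    rw [mod_small (i + s) q q0 (by omega), mod_small (j + s) q q0 (by omega)] at h
    split_ifs at h <;> omega
  have harc' : ∀ i, i < q →
      D (w ((i + s) % q)) (w (((i + 1) % q + s) % q)) := by
    intro i _
    rw [emod i]
    exact harc ((i + s) % q) (Nat.mod_lt _ q0)
  have hmem' : ∀ i, i < q →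
      t ((i + s) % q) ∈ lam (w ((i + s) % q)) (w (((i + 1) % q + s) % q)) := by
    intro i _
    rw [emod i]
    exact hmem ((i + s) % q) (Nat.mod_lt _ q0)
  have hadj' : ∀ m, m + 1 < q → m + 1 ≠ k →
      t ((m + s) % q) ≤ t ((m + 1 + s) % q) := by
    intro m hm hmk
    have e2 : (m + 1 + s) % q = ((m + s) % q + 1) % q := by
      rw [Nat.mod_add_mod]
      congr 1
      omega
    rw [e2]
    refine hcon ((m + s) % q) (Nat.mod_lt _ q0) ?_ ?_
    · rw [mod_small (m + s) q q0 (by omega)]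
      split_ifs <;> omega
    · rw [mod_small (m + s) q q0 (by omega)]
      split_ifs <;> omega
  obtain ⟨C, hC, hWk⟩ := key_weak_rot (D := D) (lam := lam) q k hq (by omega) (by omega)
    (fun n => w ((n + s) % q)) (fun n => t ((n + s) % q)) hper' hinj' harc' hmem' hadj'
  exact hW C hC hWk

private lemma three_descents
    (hW : ∀ C : DiCycle V, C.IsCycle D → ¬ IsWeakCycle D lam C)
    (q : ℕ) (hq : 2 ≤ q) (w : ℕ → V) (t : ℕ → ℕ)
    (hinj : ∀ i j, i < q → j < q → w i = w j → i = j)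
    (harc : ∀ i, i < q → D (w i) (w ((i + 1) % q)))
    (hmem : ∀ i, i < q → t i ∈ lam (w i) (w ((i + 1) % q)))
    (ht : ∀ i, i < q → t i = 1 ∨ t i = 2) :
    ∃ d1 d2 d3, d1 < q ∧ d2 < q ∧ d3 < q ∧ d1 ≠ d2 ∧ d1 ≠ d3 ∧ d2 ≠ d3 ∧
      (t d1 = 2 ∧ t ((d1 + 1) % q) = 1) ∧ (t d2 = 2 ∧ t ((d2 + 1) % q) = 1) ∧
      (t d3 = 2 ∧ t ((d3 + 1) % q) = 1) := by
  have q0 : 0 < q := by omega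
  have desc : ∀ i, i < q → t ((i + 1) % q) < t i → t i = 2 ∧ t ((i + 1) % q) = 1 := by
    intro i hi hlt
    have h1 := ht i hi
    have h2 := ht ((i + 1) % q) (Nat.mod_lt _ q0)
    omega
  obtain ⟨d1, hq1, h10, h11, hl1⟩ :=
    no_two_cuts hW q hq w t hinj harc hmem 0 1 (by omega) (by omega)
  obtain ⟨d2, hq2', h20, h21, hl2⟩ :=
    no_two_cuts hW q hq w t hinj harc hmem 0 d1 (by omega) hq1
  obtain ⟨d3, hq3, h30, h31, hl3⟩ :=
    no_two_cuts hW q hq w t hinj harc hmem (min d1 d2) (max d1 d2)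
      (by omega) (by omega)
  exact ⟨d1, d2, d3, hq1, hq2', hq3, by omega, by omega, by omega,
    desc _ hq1 hl1, desc _ hq2' hl2, desc _ hq3 hl3⟩

private lemma nonadj (q x y : ℕ) (hx : x < q) (h : (x + 1) % q ≠ y) :
    (x + 1 < q → x + 1 ≠ y) ∧ (x + 1 = q → y ≠ 0) := by
  constructor
  · intro h1 he
    exact h (by rw [Nat.mod_eq_of_lt h1]; exact he)
  · intro h1 he
    exact h (by rw [h1, Nat.mod_self]; omega)

set_option maxHeartbeats 1000000 in
private lemma cycle_ge_six
    (hW : ∀ C : DiCycle V, C.IsCycle D → ¬ IsWeakCycle D lam C)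
    (q : ℕ) (hq : 2 ≤ q) (w : ℕ → V) (t : ℕ → ℕ)
    (hinj : ∀ i j, i < q → j < q → w i = w j → i = j)
    (harc : ∀ i, i < q → D (w i) (w ((i + 1) % q)))
    (hmem : ∀ i, i < q → t i ∈ lam (w i) (w ((i + 1) % q)))
    (ht : ∀ i, i < q → t i = 1 ∨ t i = 2) : 6 ≤ q := by
  obtain ⟨d1, d2, d3, hq1, hq2', hq3, h12, h13, h23, hD1, hD2, hD3⟩ :=
    three_descents hW q hq w t hinj harc hmem ht
  have na : ∀ x y, t x = 2 ∧ t ((x + 1) % q) = 1 → t y = 2 ∧ t ((y + 1) % q) = 1 →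
      (x + 1) % q ≠ y := by
    intro x y hx hy h
    rw [h] at hx
    omega
  obtain ⟨a1, a2⟩ := nonadj q d1 d2 hq1 (na _ _ hD1 hD2)
  obtain ⟨b1, b2⟩ := nonadj q d2 d1 hq2' (na _ _ hD2 hD1)
  obtain ⟨c1', c2'⟩ := nonadj q d1 d3 hq1 (na _ _ hD1 hD3)
  obtain ⟨e1, e2⟩ := nonadj q d3 d1 hq3 (na _ _ hD3 hD1)
  obtain ⟨f1, f2⟩ := nonadj q d2 d3 hq2' (na _ _ hD2 hD3)
  obtain ⟨g1, g2⟩ := nonadj q d3 d2 hq3 (na _ _ hD3 hD2)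
  omega

set_option synthInstance.maxSize 4000 in
set_option synthInstance.maxHeartbeats 1000000 in
private lemma core6 : ∀ x y z : Fin 6,
    (x.val ≠ y.val ∧ x.val ≠ z.val ∧ y.val ≠ z.val ∧
     (x.val + 1) % 6 ≠ y.val ∧ (y.val + 1) % 6 ≠ x.val ∧
     (x.val + 1) % 6 ≠ z.val ∧ (z.val + 1) % 6 ≠ x.val ∧
     (y.val + 1) % 6 ≠ z.val ∧ (z.val + 1) % 6 ≠ y.val) →
    (x.val = 0 ∧ y.val = 2 ∧ z.val = 4) ∨ (x.val = 0 ∧ y.val = 4 ∧ z.val = 2) ∨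
    (x.val = 2 ∧ y.val = 0 ∧ z.val = 4) ∨ (x.val = 2 ∧ y.val = 4 ∧ z.val = 0) ∨
    (x.val = 4 ∧ y.val = 0 ∧ z.val = 2) ∨ (x.val = 4 ∧ y.val = 2 ∧ z.val = 0) ∨
    (x.val = 1 ∧ y.val = 3 ∧ z.val = 5) ∨ (x.val = 1 ∧ y.val = 5 ∧ z.val = 3) ∨
    (x.val = 3 ∧ y.val = 1 ∧ z.val = 5) ∨ (x.val = 3 ∧ y.val = 5 ∧ z.val = 1) ∨
    (x.val = 5 ∧ y.val = 1 ∧ z.val = 3) ∨ (x.val = 5 ∧ y.val = 3 ∧ z.val = 1) := by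
  decide

private lemma pattern6
    (hW : ∀ C : DiCycle V, C.IsCycle D → ¬ IsWeakCycle D lam C)
    (w : ℕ → V) (t : ℕ → ℕ)
    (hinj : ∀ i j, i < 6 → j < 6 → w i = w j → i = j)
    (harc : ∀ i, i < 6 → D (w i) (w ((i + 1) % 6)))
    (hmem : ∀ i, i < 6 → t i ∈ lam (w i) (w ((i + 1) % 6)))
    (ht : ∀ i, i < 6 → t i = 1 ∨ t i = 2) :
    (t 0 = 2 ∧ t 1 = 1 ∧ t 2 = 2 ∧ t 3 = 1 ∧ t 4 = 2 ∧ t 5 = 1) ∨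
    (t 0 = 1 ∧ t 1 = 2 ∧ t 2 = 1 ∧ t 3 = 2 ∧ t 4 = 1 ∧ t 5 = 2) := by
  obtain ⟨d1, d2, d3, hq1, hq2', hq3, h12, h13, h23, hD1, hD2, hD3⟩ :=
    three_descents hW 6 (by omega) w t hinj harc hmem ht
  have na : ∀ x y, t x = 2 ∧ t ((x + 1) % 6) = 1 → t y = 2 ∧ t ((y + 1) % 6) = 1 →
      (x + 1) % 6 ≠ y := by
    intro x y hx hy h
    rw [h] at hx
    omega
  have horder : (d1 = 0 ∧ d2 = 2 ∧ d3 = 4) ∨ (d1 = 0 ∧ d2 = 4 ∧ d3 = 2) ∨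
      (d1 = 2 ∧ d2 = 0 ∧ d3 = 4) ∨ (d1 = 2 ∧ d2 = 4 ∧ d3 = 0) ∨
      (d1 = 4 ∧ d2 = 0 ∧ d3 = 2) ∨ (d1 = 4 ∧ d2 = 2 ∧ d3 = 0) ∨
      (d1 = 1 ∧ d2 = 3 ∧ d3 = 5) ∨ (d1 = 1 ∧ d2 = 5 ∧ d3 = 3) ∨
      (d1 = 3 ∧ d2 = 1 ∧ d3 = 5) ∨ (d1 = 3 ∧ d2 = 5 ∧ d3 = 1) ∨
      (d1 = 5 ∧ d2 = 1 ∧ d3 = 3) ∨ (d1 = 5 ∧ d2 = 3 ∧ d3 = 1) :=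
    core6 ⟨d1, hq1⟩ ⟨d2, hq2'⟩ ⟨d3, hq3⟩ ⟨h12, h13, h23,
      na _ _ hD1 hD2, na _ _ hD2 hD1, na _ _ hD1 hD3,
      na _ _ hD3 hD1, na _ _ hD2 hD3, na _ _ hD3 hD2⟩
  clear na hinj harc hmem ht hW
  rcases horder with h|h|h|h|h|h|h|h|h|h|h|h <;> obtain ⟨rfl, rfl, rfl⟩ := h <;>
    simp only [Nat.reduceAdd, Nat.reduceMod] at hD1 hD2 hD3 <;> omega

end AuxLemmas

/-- Let `(D, lam)` be a temporal digraph with lifetime 2. If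
`(D, lam)` contains no weak-cycle, then (a) `D` has no cycle on fewer than 6
vertices, and (b) on every 6-cycle `(a, b, c, d, e, f)` all six time sets are
singletons and `lam(e₁) = lam(e₃) = lam(e₅) ≠ lam(e₂) = lam(e₄) = lam(e₆)`. -/
theorem lifetime_two_no_weakCycle (V : Type*) [Fintype V] (D : V → V → Prop)
    (lam : V → V → Finset ℕ) (hloop : ∀ u, ¬ D u u)
    (hne : ∀ u w, D u w → (lam u w).Nonempty)
    (htau : ∀ u w, lam u w ⊆ {1, 2})
    (hnw : ¬ ∃ C : DiCycle V, C.IsCycle D ∧ IsWeakCycle D lam C) :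
    (∀ C : DiCycle V, C.IsCycle D → 6 ≤ C.q) ∧
    ∀ a b c d e f : V, [a, b, c, d, e, f].Pairwise (· ≠ ·) →
      D a b → D b c → D c d → D d e → D e f → D f a →
        (lam a b).card = 1 ∧ (lam b c).card = 1 ∧ (lam c d).card = 1 ∧
        (lam d e).card = 1 ∧ (lam e f).card = 1 ∧ (lam f a).card = 1 ∧
        lam a b = lam c d ∧ lam c d = lam e f ∧
        lam b c = lam d e ∧ lam d e = lam f a ∧
        lam a b ≠ lam b c := by
  have hW : ∀ C : DiCycle V, C.IsCycle D → ¬ IsWeakCycle D lam C := by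
    intro C hC hWk
    exact hnw ⟨C, hC, hWk⟩
  constructor
  · -- part (a)
    intro C hC
    obtain ⟨hq2, hCinj, hCarc⟩ := hC
    have q0 : 0 < C.q := by omega
    set w : ℕ → V := fun n => C.v ⟨n % C.q, Nat.mod_lt n q0⟩ with hwdef
    have hinj : ∀ i j, i < C.q → j < C.q → w i = w j → i = j := by
      intro i j hi hj h
      have h2 := hCinj h
      have h3 : i % C.q = j % C.q := congrArg Fin.val h2
      rwa [Nat.mod_eq_of_lt hi, Nat.mod_eq_of_lt hj] at h3
    have harc : ∀ i, i < C.q → D (w i) (w ((i + 1) % C.q)) := by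
      intro i hi
      have h := hCarc ⟨i % C.q, Nat.mod_lt i q0⟩
      have e : C.next ⟨i % C.q, Nat.mod_lt i q0⟩
          = ⟨(i + 1) % C.q % C.q, Nat.mod_lt _ q0⟩ := by
        apply Fin.ext
        show (i % C.q + 1) % C.q = (i + 1) % C.q % C.q
        rw [Nat.mod_add_mod, Nat.mod_mod_of_dvd _ dvd_rfl]
      rw [e] at h
      exact h
    set t : ℕ → ℕ := fun i => if h : i < C.q then (hne _ _ (harc i h)).choose else 1
      with htdef
    have hmem : ∀ i, i < C.q → t i ∈ lam (w i) (w ((i + 1) % C.q)) := by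
      intro i hi
      simp only [htdef, dif_pos hi]
      exact (hne _ _ (harc i hi)).choose_spec
    have ht : ∀ i, i < C.q → t i = 1 ∨ t i = 2 := by
      intro i hi
      have h := htau _ _ (hmem i hi)
      simp only [Finset.mem_insert, Finset.mem_singleton] at h
      omega
    exact cycle_ge_six hW C.q hq2 w t hinj harc hmem ht
  · -- part (b)
    intro a b c d e f hpair hab hbc hcd hde hef hfa
    obtain ⟨ha', hpair⟩ := List.pairwise_cons.mp hpair
    obtain ⟨hb', hpair⟩ := List.pairwise_cons.mp hpair
    obtain ⟨hc', hpair⟩ := List.pairwise_cons.mp hpair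
    obtain ⟨hd', hpair⟩ := List.pairwise_cons.mp hpair
    obtain ⟨he', -⟩ := List.pairwise_cons.mp hpair
    have hab1 : a ≠ b := ha' b (by simp)
    have hac1 : a ≠ c := ha' c (by simp)
    have had1 : a ≠ d := ha' d (by simp)
    have hae1 : a ≠ e := ha' e (by simp)
    have haf1 : a ≠ f := ha' f (by simp)
    have hbc1 : b ≠ c := hb' c (by simp)
    have hbd1 : b ≠ d := hb' d (by simp)
    have hbe1 : b ≠ e := hb' e (by simp)
    have hbf1 : b ≠ f := hb' f (by simp)
    have hcd1 : c ≠ d := hc' d (by simp)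
    have hce1 : c ≠ e := hc' e (by simp)
    have hcf1 : c ≠ f := hc' f (by simp)
    have hde1 : d ≠ e := hd' e (by simp)
    have hdf1 : d ≠ f := hd' f (by simp)
    have hef1 : e ≠ f := he' f (by simp)
    set w : ℕ → V := fun n => if n % 6 = 0 then a else if n % 6 = 1 then b
      else if n % 6 = 2 then c else if n % 6 = 3 then d
      else if n % 6 = 4 then e else f with hwdef
    have hinj : ∀ i j, i < 6 → j < 6 → w i = w j → i = j := by
      intro i j hi hj hij
      interval_cases i <;> interval_cases j <;>
        simp only [hwdef] at hij <;> norm_num at hij <;> simp_all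
    have harc : ∀ i, i < 6 → D (w i) (w ((i + 1) % 6)) := by
      intro i hi
      interval_cases i <;> simp only [hwdef] <;> norm_num <;> assumption
    set t : ℕ → ℕ := fun i => if h : i < 6 then (hne _ _ (harc i h)).choose else 1
      with htdef
    have hmem : ∀ i, i < 6 → t i ∈ lam (w i) (w ((i + 1) % 6)) := by
      intro i hi
      simp only [htdef, dif_pos hi]
      exact (hne _ _ (harc i hi)).choose_spec
    have ht : ∀ i, i < 6 → t i = 1 ∨ t i = 2 := by
      intro i hi
      have h := htau _ _ (hmem i hi)
      simp only [Finset.mem_insert, Finset.mem_singleton] at h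
      omega
    have hsing : ∀ i, i < 6 → lam (w i) (w ((i + 1) % 6)) = {t i} := by
      intro i hi
      apply Finset.Subset.antisymm
      · intro s hs
        rw [Finset.mem_singleton]
        set t2 : ℕ → ℕ := fun n => if n = i then s else t n with ht2def
        have hm2 : ∀ j, j < 6 → t2 j ∈ lam (w j) (w ((j + 1) % 6)) := by
          intro j hj
          by_cases hji : j = i
          · subst hji
            simp only [ht2def, if_pos rfl]
            exact hs
          · simp only [ht2def, if_neg hji]
            exact hmem j hj
        have ht2 : ∀ j, j < 6 → t2 j = 1 ∨ t2 j = 2 := by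
          intro j hj
          have h := htau _ _ (hm2 j hj)
          simp only [Finset.mem_insert, Finset.mem_singleton] at h
          omega
        have p1 := pattern6 hW w t hinj harc hmem ht
        have p2 := pattern6 hW w t2 hinj harc hm2 ht2
        have Ei : t2 i = s := by simp [ht2def]
        have E : ∀ j : ℕ, j = i ∨ t2 j = t j := by
          intro j
          by_cases hji : j = i
          · exact Or.inl hji
          · exact Or.inr (by simp [ht2def, hji])
        have E0 := E 0
        have E1 := E 1
        have E2 := E 2
        have E3 := E 3
        have E4 := E 4
        have E5 := E 5
        interval_cases i <;>
          rcases p1 with ⟨u0,u1,u2,u3,u4,u5⟩|⟨u0,u1,u2,u3,u4,u5⟩ <;>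
          rcases p2 with ⟨v0,v1,v2,v3,v4,v5⟩|⟨v0,v1,v2,v3,v4,v5⟩ <;> omega
      · simp only [Finset.singleton_subset_iff]
        exact hmem i hi
    have L0 : lam a b = {t 0} := by
      have h := hsing 0 (by omega)
      norm_num [hwdef] at h
      exact h
    have L1 : lam b c = {t 1} := by
      have h := hsing 1 (by omega)
      norm_num [hwdef] at h
      exact h
    have L2 : lam c d = {t 2} := by
      have h := hsing 2 (by omega)
      norm_num [hwdef] at h
      exact h
    have L3 : lam d e = {t 3} := by
      have h := hsing 3 (by omega)
      norm_num [hwdef] at h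
      exact h
    have L4 : lam e f = {t 4} := by
      have h := hsing 4 (by omega)
      norm_num [hwdef] at h
      exact h
    have L5 : lam f a = {t 5} := by
      have h := hsing 5 (by omega)
      norm_num [hwdef] at h
      exact h
    have p := pattern6 hW w t hinj harc hmem ht
    have hne01 : t 0 ≠ t 1 := by rcases p with ⟨u0,u1,_⟩|⟨u0,u1,_⟩ <;> omega
    have h02 : t 0 = t 2 := by rcases p with ⟨u0,_,u2,_⟩|⟨u0,_,u2,_⟩ <;> omega
    have h24 : t 2 = t 4 := by rcases p with ⟨_,_,u2,_,u4,_⟩|⟨_,_,u2,_,u4,_⟩ <;> omega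
    have h13 : t 1 = t 3 := by rcases p with ⟨_,u1,_,u3,_⟩|⟨_,u1,_,u3,_⟩ <;> omega
    have h35 : t 3 = t 5 := by rcases p with ⟨_,_,_,u3,_,u5⟩|⟨_,_,_,u3,_,u5⟩ <;> omega
    refine ⟨by simp [L0], by simp [L1], by simp [L2], by simp [L3], by simp [L4],
      by simp [L5], ?_, ?_, ?_, ?_, ?_⟩
    · rw [L0, L2, h02]
    · rw [L2, L4, h24]
    · rw [L1, L3, h13]
    · rw [L3, L5, h35]
    · rw [L0, L1]
      simp only [ne_eq, Finset.singleton_inj]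
      exact hne01
end
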